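/- arXiv:1805.06084 — 7 statements merged into one kernel-verified Lean document; each statement's English description precedes it below -/
import Mathlib

section
/- Let A_1,…,A_L be i.i.d. positive random variables with Laplace transform E[exp(-sA)] = exp(-s^α) for α ∈ (0,1), let K_1,…,K_L : S → [0,∞) be deterministic functions, let ε(s) be a white noise process with Pr(ε(s) ≤ z) = exp(-z^{-1/α}) independent across locations and independent of the A_l, and define Z(s) = ε(s)·(Σ_{l=1}^L A_l K_l(s)^{1/α})^α. Then for locations s_1,…,s_D and z_1,…,z_D > 0, Pr(Z(s_1) ≤ z_1, …, Z(s_D) ≤ z_D) = exp(-Σ_{l=1}^L (Σ_{j=1}^D (z_j/K_l(s_j))^{-1/α})^α). -/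
open MeasureTheory ProbabilityTheory Real Filter Topology

/-- Superadditivity of (outer) measure on sets separated by disjoint measurable sets. -/
lemma aux_sum_measure_le {Ω ι : Type*} [MeasurableSpace Ω] (μ : Measure Ω)
    (s : Finset ι) (M S : ι → Set Ω) (hM : ∀ i, MeasurableSet (M i)) :
    (∀ i ∈ s, ∀ j ∈ s, i ≠ j → Disjoint (M i) (M j)) →
    ∑ i ∈ s, μ (M i ∩ S i) ≤ μ (⋃ i ∈ s, M i ∩ S i) := by
  classical
  induction s using Finset.induction_on with
  | empty => intro _; simp
  | @insert a s ha ih =>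
    intro hd
    rw [Finset.sum_insert ha, Finset.set_biUnion_insert]
    set U : Set Ω := (M a ∩ S a) ∪ ⋃ i ∈ s, M i ∩ S i with hU
    have key := measure_inter_add_diff (μ := μ) U (hM a)
    have h1 : M a ∩ S a ⊆ U ∩ M a := by
      intro x hx; exact ⟨Or.inl hx, hx.1⟩
    have h2 : (⋃ i ∈ s, M i ∩ S i) ⊆ U \ M a := by
      intro x hx
      rcases Set.mem_iUnion₂.1 hx with ⟨i, hi, hxi⟩
      refine ⟨Or.inr hx, ?_⟩
      have hdis := hd i (Finset.mem_insert_of_mem hi) a (Finset.mem_insert_self a s)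
        (by rintro rfl; exact ha hi)
      exact fun hxa => (Set.disjoint_left.1 hdis) hxi.1 hxa
    calc μ (M a ∩ S a) + ∑ i ∈ s, μ (M i ∩ S i)
        ≤ μ (U ∩ M a) + μ (U \ M a) := by
          refine add_le_add (measure_mono h1) ?_
          refine le_trans (ih ?_) (measure_mono h2)
          intro i hi j hj hij
          exact hd i (Finset.mem_insert_of_mem hi) j (Finset.mem_insert_of_mem hj) hij
    _ = μ U := key

/-- A function with nonvanishing Laplace-type integral is a.e.-measurable. -/
lemma aux_aemeasurable {Ω : Type*} [MeasurableSpace Ω] (P : Measure Ω) (B : Ω → ℝ)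
    (h : ∫ ω, Real.exp (-1 * B ω) ∂P ≠ 0) : AEMeasurable B P := by
  have hint : Integrable (fun ω => Real.exp (-1 * B ω)) P := by
    by_contra hni
    exact h (integral_undef hni)
  have hm : AEMeasurable (fun ω => Real.exp (-1 * B ω)) P := hint.aemeasurable
  have h2 : AEMeasurable (fun ω => -Real.log (Real.exp (-1 * B ω))) P :=
    (Real.measurable_log.comp_aemeasurable hm).neg
  refine h2.congr (Filter.Eventually.of_forall fun ω => ?_)
  simp [Real.log_exp]

lemma aux_div_lt_div (n a b : ℕ) (h : a < b) : ((a:ℝ)+1)/n ≤ (b:ℝ)/n := by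
  have : ((a:ℝ)+1) ≤ (b:ℝ) := by exact_mod_cast h
  exact div_le_div_of_nonneg_right this (by positivity) |>.trans_eq rfl

lemma aux_Ico_disjoint (n : ℕ) {a b : ℕ} (hab : a ≠ b) :
    Disjoint (Set.Ico ((a:ℝ)/n) (((a:ℝ)+1)/n)) (Set.Ico ((b:ℝ)/n) (((b:ℝ)+1)/n)) := by
  rw [Set.Ico_disjoint_Ico]
  rcases hab.lt_or_gt with h | h
  · exact le_trans (min_le_left _ _) (le_max_of_le_right (aux_div_lt_div n a b h))
  · exact le_trans (min_le_right _ _) (le_max_of_le_left (aux_div_lt_div n b a h))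

lemma aux_mem_Ico (n : ℕ) (hn : 1 ≤ n) (x : ℝ) (h0 : 0 ≤ x) (hx : x < n) :
    ∃ k, k < n^2 ∧ x ∈ Set.Ico ((k:ℝ)/n) (((k:ℝ)+1)/n) := by
  have hn' : (0:ℝ) < n := by exact_mod_cast hn
  refine ⟨⌊x * n⌋₊, ?_, ?_, ?_⟩
  · rw [Nat.floor_lt (by positivity)]
    push_cast
    calc x * n < n * n := by nlinarith
    _ = (n:ℝ)^2 := by ring
  · rw [div_le_iff₀ hn']
    exact Nat.floor_le (by positivity)
  · rw [lt_div_iff₀ hn']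
    exact Nat.lt_floor_add_one (x*n)

/-- Riemann-sum approximation of the Laplace transform integral. -/
lemma aux_riemann {Ω : Type*} [MeasurableSpace Ω] (P : Measure Ω) [IsProbabilityMeasure P]
    (B : Ω → ℝ) (hB : AEMeasurable B P) (hpos : ∀ᵐ ω ∂P, 0 < B ω)
    (c : ℝ) (hc : 0 < c) (J : ℝ) (hJ : ∫ ω, Real.exp (-c * B ω) ∂P = J) :
    (∀ n : ℕ, 1 ≤ n → ∑ k ∈ Finset.range (n^2),
        (P (B ⁻¹' Set.Ico ((k:ℝ)/n) (((k:ℝ)+1)/n))).toReal * Real.exp (-c * (((k:ℝ)+1)/n)) ≤ J)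
   ∧ Tendsto (fun n : ℕ => ∑ k ∈ Finset.range (n^2),
        (P (B ⁻¹' Set.Ico ((k:ℝ)/n) (((k:ℝ)+1)/n))).toReal * Real.exp (-c * (((k:ℝ)+1)/n)))
      atTop (𝓝 J)
   ∧ Tendsto (fun n : ℕ => (P (B ⁻¹' Set.Ico (0:ℝ) (1/(n:ℝ)))).toReal) atTop (𝓝 0)
   ∧ Tendsto (fun n : ℕ => (P (B ⁻¹' Set.Ici ((n:ℝ)))).toReal) atTop (𝓝 0) := by
  classical
  set B' := hB.mk B with hB'def
  have hB' : Measurable B' := hB.measurable_mk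
  have hBB' : B =ᵐ[P] B' := hB.ae_eq_mk
  have hpos' : ∀ᵐ ω ∂P, 0 < B' ω := by
    filter_upwards [hpos, hBB'] with ω h1 h2; rw [← h2]; exact h1
  have hPeq : ∀ S : Set ℝ, P (B ⁻¹' S) = P (B' ⁻¹' S) := by
    intro S; apply measure_congr
    rw [Filter.eventuallyEq_set]
    filter_upwards [hBB'] with ω h
    simp [Set.mem_preimage, h]
  set f' : Ω → ℝ := fun ω => Real.exp (-c * B' ω) with hf'def
  have hf'meas : Measurable f' := (hB'.const_mul (-c)).exp
  have hf'pos : ∀ ω, 0 < f' ω := fun ω => Real.exp_pos _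
  have hf'int : Integrable f' P := by
    refine Integrable.mono' (integrable_const 1) hf'meas.aestronglyMeasurable ?_
    filter_upwards [hpos'] with ω h
    rw [Real.norm_eq_abs, abs_of_pos (hf'pos ω)]
    exact Real.exp_le_one_iff.2 (by nlinarith)
  have hJ' : ∫ ω, f' ω ∂P = J := by
    rw [← hJ]; apply integral_congr_ae
    filter_upwards [hBB'] with ω h; rw [hf'def]; simp [h]
  -- preimage intervals
  set S : ℕ → ℕ → Set Ω := fun n k => B' ⁻¹' Set.Ico ((k:ℝ)/n) (((k:ℝ)+1)/n) with hSdef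
  have hSmeas : ∀ n k, MeasurableSet (S n k) := fun n k => hB' measurableSet_Ico
  have hSdisj : ∀ n k k', k ≠ k' → Disjoint (S n k) (S n k') :=
    fun n k k' hkk' => Disjoint.preimage B' (aux_Ico_disjoint n hkk')
  -- the tail measure
  set tl : ℕ → ℝ := fun n => (P (B' ⁻¹' Set.Ici ((n:ℝ)))).toReal with htldef
  have htail0 : P (B' ⁻¹' Set.Iio 0) = 0 := by
    refine measure_mono_null ?_ (ae_iff.1 hpos')
    intro ω (h : B' ω < 0); simpa using h.le
  -- tail tendsto 0
  have htailtends : Tendsto tl atTop (𝓝 0) := by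
    have h1 : Tendsto (fun n : ℕ => P (B' ⁻¹' Set.Ici ((n:ℝ)))) atTop
        (𝓝 (P (⋂ n : ℕ, B' ⁻¹' Set.Ici ((n:ℝ))))) := by
      apply tendsto_measure_iInter_atTop
      · exact fun n => (hB' measurableSet_Ici).nullMeasurableSet
      · intro n m hnm
        apply Set.preimage_mono
        exact Set.Ici_subset_Ici.2 (by exact_mod_cast hnm)
      · exact ⟨0, measure_ne_top _ _⟩
    have h2 : (⋂ n : ℕ, B' ⁻¹' Set.Ici ((n:ℝ))) = ∅ := by
      ext ω
      simp only [Set.mem_iInter, Set.mem_preimage, Set.mem_Ici, Set.mem_empty_iff_false,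
        iff_false, not_forall]
      obtain ⟨n, hn⟩ := exists_nat_gt (B' ω)
      exact ⟨n, not_le.2 hn⟩
    rw [h2] at h1
    simpa [htldef, Function.comp_def] using (ENNReal.tendsto_toReal (by simp)).comp h1
  -- small-interval measure tendsto 0
  have hm0tends : Tendsto (fun n : ℕ => (P (B' ⁻¹' Set.Ico (0:ℝ) (1/(n:ℝ)))).toReal)
      atTop (𝓝 0) := by
    have h1 : Tendsto (fun n : ℕ => P (B' ⁻¹' Set.Ico (0:ℝ) (1/((n:ℝ)+1)))) atTop
        (𝓝 (P (⋂ n : ℕ, B' ⁻¹' Set.Ico (0:ℝ) (1/((n:ℝ)+1))))) := by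
      apply tendsto_measure_iInter_atTop
      · exact fun n => (hB' measurableSet_Ico).nullMeasurableSet
      · intro n m hnm
        apply Set.preimage_mono
        apply Set.Ico_subset_Ico_right
        apply one_div_le_one_div_of_le (by positivity)
        have : (n:ℝ) ≤ m := by exact_mod_cast hnm
        linarith
      · exact ⟨0, measure_ne_top _ _⟩
    have h2 : (⋂ n : ℕ, B' ⁻¹' Set.Ico (0:ℝ) (1/((n:ℝ)+1))) = B' ⁻¹' {0} := by
      ext ω
      simp only [Set.mem_iInter, Set.mem_preimage, Set.mem_Ico, Set.mem_singleton_iff]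
      constructor
      · intro h
        refine le_antisymm ?_ (h 0).1
        by_contra hpos0
        push_neg at hpos0
        obtain ⟨n, hn⟩ := exists_nat_one_div_lt hpos0
        exact absurd (h n).2 (not_lt.2 hn.le)
      · intro h n
        rw [h]
        exact ⟨le_refl _, by positivity⟩
    have h3 : P (B' ⁻¹' ({0} : Set ℝ)) = 0 := by
      refine measure_mono_null ?_ (ae_iff.1 hpos')
      intro ω (h : B' ω = 0); simp [h]
    rw [h2, h3] at h1
    have hshift : Tendsto (fun n : ℕ => (P (B' ⁻¹' Set.Ico (0:ℝ) (1/((n:ℝ)+1)))).toReal)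
        atTop (𝓝 0) := by
      have := (ENNReal.tendsto_toReal (show (0:ENNReal) ≠ ⊤ by simp)).comp h1
      simpa [Function.comp_def] using this
    rw [← tendsto_add_atTop_iff_nat 1]
    simp only [Nat.cast_add, Nat.cast_one]
    exact hshift
  -- main estimates for fixed n
  have hmain : ∀ n : ℕ, 1 ≤ n →
      (∑ k ∈ Finset.range (n^2), (P (S n k)).toReal * Real.exp (-c * (((k:ℝ)+1)/n)) ≤ J)
      ∧ Real.exp (-(c * (1/n))) * (J - tl n) ≤
        ∑ k ∈ Finset.range (n^2), (P (S n k)).toReal * Real.exp (-c * (((k:ℝ)+1)/n)) := by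
    intro n hn
    have hn' : (0:ℝ) < n := by exact_mod_cast hn
    set U : Set Ω := ⋃ k ∈ Finset.range (n^2), S n k with hUdef
    have hUmeas : MeasurableSet U := Finset.measurableSet_biUnion _ (fun k _ => hSmeas n k)
    have hsplitU : ∫ ω in U, f' ω ∂P = ∑ k ∈ Finset.range (n^2), ∫ ω in S n k, f' ω ∂P :=
      integral_biUnion_finset _ (fun k _ => hSmeas n k)
        (fun k _ k' _ hkk' => hSdisj n k k' hkk') (fun k _ => hf'int.integrableOn)
    have hcompl : ∫ ω in U, f' ω ∂P + ∫ ω in Uᶜ, f' ω ∂P = J := by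
      rw [integral_add_compl hUmeas hf'int, hJ']
    have hUcnonneg : 0 ≤ ∫ ω in Uᶜ, f' ω ∂P :=
      setIntegral_nonneg hUmeas.compl (fun ω _ => (hf'pos ω).le)
    have hUc : Uᶜ ⊆ (B' ⁻¹' Set.Iio 0) ∪ (B' ⁻¹' Set.Ici (n:ℝ)) := by
      intro ω hω
      by_contra hcon
      simp only [Set.mem_union, Set.mem_preimage, Set.mem_Iio, Set.mem_Ici, not_or,
        not_lt, not_le] at hcon
      obtain ⟨k, hk, hmem⟩ := aux_mem_Ico n hn (B' ω) hcon.1 hcon.2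
      exact hω (Set.mem_biUnion (Finset.mem_range.2 hk) hmem)
    have hUcle : ∫ ω in Uᶜ, f' ω ∂P ≤ tl n := by
      calc ∫ ω in Uᶜ, f' ω ∂P
          ≤ ∫ ω in (B' ⁻¹' Set.Iio 0) ∪ (B' ⁻¹' Set.Ici (n:ℝ)), f' ω ∂P := by
            apply setIntegral_mono_set hf'int.integrableOn
              (Filter.Eventually.of_forall (fun ω => (hf'pos ω).le))
              (HasSubset.Subset.eventuallyLE hUc)
        _ = ∫ ω in (B' ⁻¹' Set.Iio 0), f' ω ∂P + ∫ ω in (B' ⁻¹' Set.Ici (n:ℝ)), f' ω ∂P := by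
            apply setIntegral_union
            · exact Disjoint.preimage B' (Set.Iio_disjoint_Ici
                (le_trans zero_le_one (by exact_mod_cast hn)))
            · exact hB' measurableSet_Ici
            · exact hf'int.integrableOn
            · exact hf'int.integrableOn
        _ ≤ 0 + (P (B' ⁻¹' Set.Ici (n:ℝ))).toReal * 1 := by
            apply add_le_add
            · rw [show P.restrict (B' ⁻¹' Set.Iio 0) = 0 from Measure.restrict_eq_zero.2 htail0,
                integral_zero_measure]
            · calc ∫ ω in (B' ⁻¹' Set.Ici (n:ℝ)), f' ω ∂P
                  ≤ ∫ _ω in (B' ⁻¹' Set.Ici (n:ℝ)), (1:ℝ) ∂P := by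
                    apply setIntegral_mono_on hf'int.integrableOn
                      (integrableOn_const (measure_ne_top _ _) enorm_ne_top)
                      (hB' measurableSet_Ici)
                    intro ω hω
                    have : (0:ℝ) ≤ B' ω := le_trans hn'.le hω
                    exact Real.exp_le_one_iff.2 (by nlinarith)
                _ = (P (B' ⁻¹' Set.Ici (n:ℝ))).toReal * 1 := by
                    rw [setIntegral_const]; simp [Measure.real]
        _ = tl n := by rw [htldef]; ring
    -- per-interval bounds
    have hk1 : ∀ k, (P (S n k)).toReal * Real.exp (-c * (((k:ℝ)+1)/n)) ≤ ∫ ω in S n k, f' ω ∂P := by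
      intro k
      have : (P (S n k)).toReal * Real.exp (-c * (((k:ℝ)+1)/n))
          = ∫ _ω in S n k, Real.exp (-c * (((k:ℝ)+1)/n)) ∂P := by
        rw [setIntegral_const]; simp [mul_comm, Measure.real]
      rw [this]
      apply setIntegral_mono_on (integrableOn_const (measure_ne_top _ _) enorm_ne_top)
        hf'int.integrableOn (hSmeas n k)
      intro ω hω
      apply Real.exp_le_exp.2
      have h2 : B' ω < ((k:ℝ)+1)/n := hω.2
      nlinarith
    have hk2 : ∀ k, ∫ ω in S n k, f' ω ∂P
        ≤ Real.exp (c * (1/n)) * ((P (S n k)).toReal * Real.exp (-c * (((k:ℝ)+1)/n))) := by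
      intro k
      have heq : Real.exp (c * (1/n)) * Real.exp (-c * (((k:ℝ)+1)/n))
          = Real.exp (-c * ((k:ℝ)/n)) := by
        rw [← Real.exp_add]; congr 1; field_simp; ring
      have hle : ∫ ω in S n k, f' ω ∂P ≤ ∫ _ω in S n k, Real.exp (-c * ((k:ℝ)/n)) ∂P := by
        apply setIntegral_mono_on hf'int.integrableOn
          (integrableOn_const (measure_ne_top _ _) enorm_ne_top) (hSmeas n k)
        intro ω hω
        apply Real.exp_le_exp.2
        have h2 : (k:ℝ)/n ≤ B' ω := hω.1
        nlinarith
      rw [setIntegral_const] at hle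
      calc ∫ ω in S n k, f' ω ∂P ≤ (P (S n k)).toReal • Real.exp (-c * ((k:ℝ)/n)) := hle
      _ = Real.exp (c * (1/n)) * ((P (S n k)).toReal * Real.exp (-c * (((k:ℝ)+1)/n))) := by
          rw [smul_eq_mul, ← heq]; ring
    constructor
    · calc ∑ k ∈ Finset.range (n^2), (P (S n k)).toReal * Real.exp (-c * (((k:ℝ)+1)/n))
          ≤ ∑ k ∈ Finset.range (n^2), ∫ ω in S n k, f' ω ∂P :=
            Finset.sum_le_sum (fun k _ => hk1 k)
      _ = ∫ ω in U, f' ω ∂P := hsplitU.symm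
      _ ≤ J := by linarith
    · have h1 : J - tl n ≤ ∫ ω in U, f' ω ∂P := by linarith
      have h2 : ∫ ω in U, f' ω ∂P
          ≤ Real.exp (c * (1/n)) * ∑ k ∈ Finset.range (n^2),
            (P (S n k)).toReal * Real.exp (-c * (((k:ℝ)+1)/n)) := by
        rw [hsplitU, Finset.mul_sum]
        exact Finset.sum_le_sum (fun k _ => hk2 k)
      have h3 : Real.exp (-(c * (1/n))) * Real.exp (c * (1/n)) = 1 := by
        rw [← Real.exp_add]; simp
      have h4 : (0:ℝ) < Real.exp (-(c * (1/n))) := Real.exp_pos _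
      calc Real.exp (-(c * (1/n))) * (J - tl n)
          ≤ Real.exp (-(c * (1/n))) * (Real.exp (c * (1/n)) *
            ∑ k ∈ Finset.range (n^2), (P (S n k)).toReal * Real.exp (-c * (((k:ℝ)+1)/n))) :=
            mul_le_mul_of_nonneg_left (le_trans h1 h2) h4.le
      _ = ∑ k ∈ Finset.range (n^2), (P (S n k)).toReal * Real.exp (-c * (((k:ℝ)+1)/n)) := by
            rw [← mul_assoc, h3, one_mul]
  -- assemble
  refine ⟨?_, ?_, ?_, ?_⟩
  · intro n hn
    simp only [hPeq]
    exact (hmain n hn).1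
  · have hlow : Tendsto (fun n : ℕ => Real.exp (-(c * (1/n))) * (J - tl n)) atTop (𝓝 J) := by
      have e1 : Tendsto (fun n : ℕ => Real.exp (-(c * (1/n)))) atTop (𝓝 1) := by
        have : Tendsto (fun n : ℕ => -(c * (1/n))) atTop (𝓝 0) := by
          have := tendsto_const_div_atTop_nhds_zero_nat c
          simpa [mul_one_div, div_eq_mul_inv] using this.neg
        simpa [Function.comp_def] using (Real.continuous_exp.continuousAt.tendsto.comp this)
      have e2 : Tendsto (fun n : ℕ => J - tl n) atTop (𝓝 J) := by
        simpa using tendsto_const_nhds.sub htailtends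
      simpa using e1.mul e2
    apply tendsto_of_tendsto_of_tendsto_of_le_of_le' hlow tendsto_const_nhds
    · filter_upwards [eventually_ge_atTop 1] with n hn
      simp only [hPeq]
      exact (hmain n hn).2
    · filter_upwards [eventually_ge_atTop 1] with n hn
      simp only [hPeq]
      exact (hmain n hn).1
  · simpa only [hPeq] using hm0tends
  · simpa only [hPeq] using htailtends

/-- Finite-dimensional distributions of the Reich–Shaby process.
With A_1,…,A_L i.i.d. positive-stable (Laplace transform exp(-s^α)), an
independent white-noise process ε with (1/α)-Fréchet marginals at the D
locations, deterministic nonneg. basis values K l j = K_l(s_j), and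
Z_j = ε_j · (Σ_l A_l K_l(s_j)^{1/α})^α, we have
Pr(Z_1 ≤ z_1, …, Z_D ≤ z_D) = exp(-Σ_l (Σ_j (z_j/K_l(s_j))^{-1/α})^α). -/
theorem reich_shaby_fdd
    {Ω : Type*} [MeasurableSpace Ω] (P : Measure Ω) [IsProbabilityMeasure P]
    (L D : ℕ) (hL : 0 < L) (hD : 0 < D)
    (α : ℝ) (hα : α ∈ Set.Ioo (0:ℝ) 1)
    (A : Fin L → Ω → ℝ) (ε : Fin D → Ω → ℝ)
    (K : Fin L → Fin D → ℝ) (hK : ∀ l j, 0 < K l j)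
    -- A_1,…,A_L and ε(s_1),…,ε(s_D) are all mutually independent:
    (hindep : iIndepFun
      (Sum.elim A ε) P)
    -- A_l positive with positive-stable Laplace transform:
    (hApos : ∀ l, ∀ᵐ ω ∂P, 0 < A l ω)
    (hA_laplace : ∀ l, ∀ s : ℝ, 0 ≤ s →
      ∫ ω, Real.exp (-s * A l ω) ∂P = Real.exp (-(s ^ α)))
    -- ε has (1/α)-Fréchet marginals:
    (hε : ∀ j, ∀ z : ℝ, 0 < z →
      P {ω | ε j ω ≤ z} = ENNReal.ofReal (Real.exp (-(z ^ (-(1/α)))))) :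
    ∀ z : Fin D → ℝ, (∀ j, 0 < z j) →
      P {ω | ∀ j, ε j ω * (∑ l, A l ω * K l j ^ (1/α)) ^ α ≤ z j}
        = ENNReal.ofReal
            (Real.exp (-(∑ l, (∑ j, (z j / K l j) ^ (-(1/α))) ^ α))) := by
  classical
  intro z hz
  obtain ⟨hα0, hα1⟩ := hα
  have hαne : α ≠ 0 := ne_of_gt hα0
  set q : ℝ := -(1/α) with hqdef
  set c : Fin L → ℝ := fun l => ∑ j, (z j / K l j) ^ q with hcdef
  have hKpow : ∀ l j, 0 < K l j ^ (1/α) := fun l j => Real.rpow_pos_of_pos (hK l j) _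
  have hcpos : ∀ l, 0 < c l := by
    intro l
    rw [hcdef]
    exact Finset.sum_pos (fun j _ => Real.rpow_pos_of_pos (div_pos (hz j) (hK l j)) q)
      ⟨⟨0, hD⟩, Finset.mem_univ _⟩
  have hcalt : ∀ l, c l = ∑ j, (z j) ^ q * K l j ^ (1/α) := by
    intro l
    rw [hcdef]
    apply Finset.sum_congr rfl
    intro j _
    rw [Real.div_rpow (hz j).le (hK l j).le, hqdef, Real.rpow_neg (hK l j).le, div_inv_eq_mul]
  -- the corner algebra
  have corner : ∀ a : Fin L → ℝ, (∀ l, 0 < a l) →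
      ∑ j, (z j / (∑ l, a l * K l j ^ (1/α)) ^ α) ^ q = ∑ l, a l * c l := by
    intro a ha
    have hs : ∀ j, 0 < ∑ l, a l * K l j ^ (1/α) := fun j =>
      Finset.sum_pos (fun l _ => mul_pos (ha l) (hKpow l j)) ⟨⟨0, hL⟩, Finset.mem_univ _⟩
    have hterm : ∀ j, (z j / (∑ l, a l * K l j ^ (1/α)) ^ α) ^ q
        = (z j) ^ q * ∑ l, a l * K l j ^ (1/α) := by
      intro j
      have hpow : (((∑ l, a l * K l j ^ (1/α)) ^ α) ^ q) = (∑ l, a l * K l j ^ (1/α))⁻¹ := by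
        rw [← Real.rpow_mul (hs j).le, hqdef]
        have h2 : α * -(1/α) = -1 := by field_simp
        rw [h2, Real.rpow_neg_one]
      rw [Real.div_rpow (hz j).le (Real.rpow_nonneg (hs j).le α), hpow, div_inv_eq_mul]
    calc ∑ j, (z j / (∑ l, a l * K l j ^ (1/α)) ^ α) ^ q
        = ∑ j, (z j)^q * ∑ l, a l * K l j ^ (1/α) := Finset.sum_congr rfl (fun j _ => hterm j)
    _ = ∑ l, a l * c l := by
        simp_rw [Finset.mul_sum]
        rw [Finset.sum_comm]
        apply Finset.sum_congr rfl
        intro l _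
        rw [hcalt l, Finset.mul_sum]
        apply Finset.sum_congr rfl
        intro j _
        ring
  -- the event
  set E := {ω | ∀ j, ε j ω * (∑ l, A l ω * K l j ^ (1/α)) ^ α ≤ z j} with hEdef
  -- measurability of the A's
  have hAmeas : ∀ l, AEMeasurable (A l) P := fun l =>
    aux_aemeasurable P (A l) (by rw [hA_laplace l 1 zero_le_one]; exact (Real.exp_pos _).ne')
  set A' : Fin L → Ω → ℝ := fun l => (hAmeas l).mk (A l) with hA'def
  have hA'meas : ∀ l, Measurable (A' l) := fun l => (hAmeas l).measurable_mk
  have hAA' : ∀ᵐ ω ∂P, ∀ l, A l ω = A' l ω := ae_all_iff.2 (fun l => (hAmeas l).ae_eq_mk)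
  have hG2 : P {ω | ¬ ∀ l, A l ω = A' l ω} = 0 := ae_iff.1 hAA'
  have hGpos : P {ω | ¬ ∀ l, 0 < A l ω} = 0 := ae_iff.1 (ae_all_iff.2 hApos)
  -- Riemann sums for each l
  have hRie := fun l => aux_riemann P (A l) (hAmeas l) (hApos l) (c l) (hcpos l) _
    (hA_laplace l (c l) (hcpos l).le)
  set Slow : Fin L → ℕ → ℝ := fun l n => ∑ k ∈ Finset.range (n^2),
      (P (A l ⁻¹' Set.Ico ((k:ℝ)/n) (((k:ℝ)+1)/n))).toReal * Real.exp (-c l * (((k:ℝ)+1)/n))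
    with hSlowdef
  have hSlownn : ∀ l n, 0 ≤ Slow l n := fun l n =>
    Finset.sum_nonneg (fun k _ => mul_nonneg ENNReal.toReal_nonneg (Real.exp_pos _).le)
  have hSlowt : ∀ l, Tendsto (Slow l) atTop (𝓝 (Real.exp (-(c l ^ α)))) := fun l => (hRie l).2.1
  have hm0t : ∀ l, Tendsto (fun n : ℕ => (P (A l ⁻¹' Set.Ico (0:ℝ) (1/(n:ℝ)))).toReal)
      atTop (𝓝 0) := fun l => (hRie l).2.2.1
  have htailt : ∀ l, Tendsto (fun n : ℕ => (P (A l ⁻¹' Set.Ici ((n:ℝ)))).toReal)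
      atTop (𝓝 0) := fun l => (hRie l).2.2.2
  -- the basic rectangle formula from independence
  have rect : ∀ (I : Fin L → Set ℝ) (u : Fin D → ℝ), (∀ l, MeasurableSet (I l)) →
      (∀ j, 0 < u j) →
      P ((⋂ l, A l ⁻¹' I l) ∩ ⋂ j, ε j ⁻¹' Set.Iic (u j))
        = (∏ l, P (A l ⁻¹' I l)) * ∏ j, ENNReal.ofReal (Real.exp (-(u j ^ q))) := by
    intro I u hI hu
    have key := hindep.measure_inter_preimage_eq_mul (S := Finset.univ)
      (sets := Sum.elim I (fun j => Set.Iic (u j)))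
      (fun i _ => by
        cases i with
        | inl l => exact hI l
        | inr j => exact measurableSet_Iic)
    have h1 : (⋂ i ∈ (Finset.univ : Finset (Fin L ⊕ Fin D)),
        Sum.elim A ε i ⁻¹' Sum.elim I (fun j => Set.Iic (u j)) i)
        = (⋂ l, A l ⁻¹' I l) ∩ ⋂ j, ε j ⁻¹' Set.Iic (u j) := by
      ext ω
      simp [Sum.forall]
    have h2 : ∏ i ∈ (Finset.univ : Finset (Fin L ⊕ Fin D)),
        P (Sum.elim A ε i ⁻¹' Sum.elim I (fun j => Set.Iic (u j)) i)
        = (∏ l, P (A l ⁻¹' I l)) * ∏ j, P (ε j ⁻¹' Set.Iic (u j)) := by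
      rw [Fintype.prod_sum_type]
      rfl
    rw [h1, h2] at key
    rw [key]
    congr 1
    apply Finset.prod_congr rfl
    intro j _
    rw [← hε j (u j) (hu j)]
    rfl
  -- product-of-exponentials formula for the ε-part
  have prodofReal : ∀ a : Fin L → ℝ, (∀ l, 0 < a l) →
      (∏ j, ENNReal.ofReal (Real.exp (-((z j / (∑ l, a l * K l j ^ (1/α)) ^ α) ^ q))))
        = ENNReal.ofReal (∏ l, Real.exp (-c l * a l)) := by
    intro a ha
    rw [← ENNReal.ofReal_prod_of_nonneg (fun j _ => (Real.exp_pos _).le)]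
    congr 1
    rw [← Real.exp_sum, ← Real.exp_sum]
    congr 1
    rw [Finset.sum_neg_distrib, corner a ha, ← Finset.sum_neg_distrib]
    exact Finset.sum_congr rfl (fun l _ => by ring)
  -- the lower bound
  have lower : ∀ n : ℕ, 1 ≤ n → ENNReal.ofReal (∏ l, Slow l n) ≤ P E := by
    intro n hn
    have hn' : (0:ℝ) < n := by exact_mod_cast hn
    set grid := Fintype.piFinset (fun _ : Fin L => Finset.range (n^2)) with hgrid
    set up : (Fin L → ℕ) → Fin D → ℝ :=
      fun k j => z j / (∑ l, (((k l:ℝ)+1)/n) * K l j ^ (1/α)) ^ α with hup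
    have hcorner_pos : ∀ k : Fin L → ℕ, ∀ l, (0:ℝ) < ((k l:ℝ)+1)/n := by
      intro k l; positivity
    have hupos : ∀ (k : Fin L → ℕ) j, 0 < up k j := by
      intro k j
      apply div_pos (hz j)
      apply Real.rpow_pos_of_pos
      exact Finset.sum_pos (fun l _ => mul_pos (hcorner_pos k l) (hKpow l j))
        ⟨⟨0, hL⟩, Finset.mem_univ _⟩
    set cell : (Fin L → ℕ) → Set Ω :=
      fun k => ⋂ l, A l ⁻¹' Set.Ico ((k l:ℝ)/n) (((k l:ℝ)+1)/n) with hcell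
    set cell' : (Fin L → ℕ) → Set Ω :=
      fun k => ⋂ l, A' l ⁻¹' Set.Ico ((k l:ℝ)/n) (((k l:ℝ)+1)/n) with hcell'
    set Rect : (Fin L → ℕ) → Set Ω := fun k => ⋂ j, ε j ⁻¹' Set.Iic (up k j) with hRect
    -- each piece is inside E
    have hsub : ∀ k : Fin L → ℕ, cell k ∩ Rect k ⊆ E := by
      intro k ω hω
      obtain ⟨h1, h2⟩ := hω
      have hA : ∀ l, A l ω ∈ Set.Ico ((k l:ℝ)/n) (((k l:ℝ)+1)/n) :=
        fun l => Set.mem_iInter.1 h1 l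
      have hεω : ∀ j, ε j ω ≤ up k j := fun j => Set.mem_iInter.1 h2 j
      intro j
      have hsnn : 0 ≤ ∑ l, A l ω * K l j ^ (1/α) :=
        Finset.sum_nonneg (fun l _ => mul_nonneg
          (le_trans (by positivity) (hA l).1) (hKpow l j).le)
      have hsle : ∑ l, A l ω * K l j ^ (1/α) ≤ ∑ l, (((k l:ℝ)+1)/n) * K l j ^ (1/α) :=
        Finset.sum_le_sum (fun l _ => mul_le_mul_of_nonneg_right (hA l).2.le (hKpow l j).le)
      have hWle : (∑ l, A l ω * K l j ^ (1/α)) ^ α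
          ≤ (∑ l, (((k l:ℝ)+1)/n) * K l j ^ (1/α)) ^ α :=
        Real.rpow_le_rpow hsnn hsle hα0.le
      have hWup : (0:ℝ) < (∑ l, (((k l:ℝ)+1)/n) * K l j ^ (1/α)) ^ α :=
        Real.rpow_pos_of_pos (Finset.sum_pos
          (fun l _ => mul_pos (hcorner_pos k l) (hKpow l j)) ⟨⟨0, hL⟩, Finset.mem_univ _⟩) α
      rcases le_or_gt (ε j ω) 0 with hneg | hpos
      · have : ε j ω * (∑ l, A l ω * K l j ^ (1/α)) ^ α ≤ 0 :=
          mul_nonpos_of_nonpos_of_nonneg hneg (Real.rpow_nonneg hsnn α)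
        linarith [hz j]
      · calc ε j ω * (∑ l, A l ω * K l j ^ (1/α)) ^ α
            ≤ ε j ω * (∑ l, (((k l:ℝ)+1)/n) * K l j ^ (1/α)) ^ α :=
              mul_le_mul_of_nonneg_left hWle hpos.le
        _ ≤ up k j * (∑ l, (((k l:ℝ)+1)/n) * K l j ^ (1/α)) ^ α :=
              mul_le_mul_of_nonneg_right (hεω j) hWup.le
        _ = z j := by rw [hup]; exact div_mul_cancel₀ _ hWup.ne'
    -- the measures of the pieces
    have hcongr : ∀ k : Fin L → ℕ, P (cell k ∩ Rect k) = P (cell' k ∩ Rect k) := by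
      intro k
      apply measure_congr
      rw [Filter.eventuallyEq_set]
      filter_upwards [hAA'] with ω h
      constructor
      · rintro ⟨h1, h2⟩
        refine ⟨Set.mem_iInter.2 (fun l => ?_), h2⟩
        have := Set.mem_iInter.1 h1 l
        rwa [Set.mem_preimage, h l] at this
      · rintro ⟨h1, h2⟩
        refine ⟨Set.mem_iInter.2 (fun l => ?_), h2⟩
        have := Set.mem_iInter.1 h1 l
        rwa [Set.mem_preimage, ← h l] at this
    have hMmeas : ∀ k : Fin L → ℕ, MeasurableSet (cell' k) :=
      fun k => MeasurableSet.iInter (fun l => hA'meas l measurableSet_Ico)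
    have hdisj : ∀ k ∈ grid, ∀ k' ∈ grid, k ≠ k' → Disjoint (cell' k) (cell' k') := by
      intro k _ k' _ hkk'
      obtain ⟨l, hl⟩ := Function.ne_iff.1 hkk'
      exact Disjoint.mono (Set.iInter_subset _ l) (Set.iInter_subset _ l)
        (Disjoint.preimage _ (aux_Ico_disjoint n hl))
    have step2 : ∑ k ∈ grid, P (cell k ∩ Rect k) ≤ P E := by
      calc ∑ k ∈ grid, P (cell k ∩ Rect k)
          = ∑ k ∈ grid, P (cell' k ∩ Rect k) := Finset.sum_congr rfl (fun k _ => hcongr k)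
        _ ≤ P (⋃ k ∈ grid, cell' k ∩ Rect k) := aux_sum_measure_le P grid cell' Rect hMmeas hdisj
        _ ≤ P (E ∪ {ω | ¬ ∀ l, A l ω = A' l ω}) := by
            apply measure_mono
            intro ω hω
            rcases Set.mem_iUnion₂.1 hω with ⟨k, hk, hmem⟩
            by_cases hg : ∀ l, A l ω = A' l ω
            · left
              apply hsub k
              refine ⟨Set.mem_iInter.2 (fun l => ?_), hmem.2⟩
              have := Set.mem_iInter.1 hmem.1 l
              rwa [Set.mem_preimage, ← hg l] at this
            · right; exact hg
        _ ≤ P E + P {ω | ¬ ∀ l, A l ω = A' l ω} := measure_union_le _ _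
        _ = P E := by rw [hG2, add_zero]
    -- the value of each piece
    have step3 : ∀ k ∈ grid, P (cell k ∩ Rect k)
        = ∏ l, (P (A l ⁻¹' Set.Ico ((k l:ℝ)/n) (((k l:ℝ)+1)/n))
            * ENNReal.ofReal (Real.exp (-c l * (((k l:ℝ)+1)/n)))) := by
      intro k _
      rw [hcell, hRect]
      rw [rect _ _ (fun l => measurableSet_Ico) (hupos k)]
      have hpr := prodofReal (fun l => ((k l:ℝ)+1)/n) (fun l => hcorner_pos k l)
      simp only [hup]
      rw [hpr]
      rw [ENNReal.ofReal_prod_of_nonneg (fun l _ => (Real.exp_pos _).le),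
        ← Finset.prod_mul_distrib]
    have step5 : ∀ l, (∑ k ∈ Finset.range (n^2),
        P (A l ⁻¹' Set.Ico ((k:ℝ)/n) (((k:ℝ)+1)/n))
          * ENNReal.ofReal (Real.exp (-c l * (((k:ℝ)+1)/n))))
        = ENNReal.ofReal (Slow l n) := by
      intro l
      rw [hSlowdef]
      rw [ENNReal.ofReal_sum_of_nonneg
        (fun k _ => mul_nonneg ENNReal.toReal_nonneg (Real.exp_pos _).le)]
      apply Finset.sum_congr rfl
      intro k _
      rw [ENNReal.ofReal_mul ENNReal.toReal_nonneg, ENNReal.ofReal_toReal (measure_ne_top _ _)]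
    calc ENNReal.ofReal (∏ l, Slow l n)
        = ∏ l, ENNReal.ofReal (Slow l n) :=
          ENNReal.ofReal_prod_of_nonneg (fun l _ => hSlownn l n)
      _ = ∏ l, (∑ k ∈ Finset.range (n^2),
            P (A l ⁻¹' Set.Ico ((k:ℝ)/n) (((k:ℝ)+1)/n))
              * ENNReal.ofReal (Real.exp (-c l * (((k:ℝ)+1)/n)))) := by
          exact Finset.prod_congr rfl (fun l _ => (step5 l).symm)
      _ = ∑ k ∈ grid, ∏ l, (P (A l ⁻¹' Set.Ico ((k l:ℝ)/n) (((k l:ℝ)+1)/n))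
              * ENNReal.ofReal (Real.exp (-c l * (((k l:ℝ)+1)/n)))) := by
          rw [hgrid]
          exact Finset.prod_univ_sum _ _
      _ = ∑ k ∈ grid, P (cell k ∩ Rect k) :=
          (Finset.sum_congr rfl (fun k hk => (step3 k hk).symm))
      _ ≤ P E := step2
  -- the upper bound
  have upper : ∀ n : ℕ, 1 ≤ n → P E ≤ ENNReal.ofReal
      ((∏ l, (Real.exp (c l * (1/(n:ℝ))) * Slow l n))
        + ((∑ l, (P (A l ⁻¹' Set.Ico (0:ℝ) (1/(n:ℝ)))).toReal)
          + ∑ l, (P (A l ⁻¹' Set.Ici ((n:ℝ)))).toReal)) := by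
    intro n hn
    have hn' : (0:ℝ) < n := by exact_mod_cast hn
    set grid' := Fintype.piFinset (fun _ : Fin L => Finset.Ico 1 (n^2)) with hgrid'
    set dn : (Fin L → ℕ) → Fin D → ℝ :=
      fun k j => z j / (∑ l, ((k l:ℝ)/n) * K l j ^ (1/α)) ^ α with hdn
    set cellU : (Fin L → ℕ) → Set Ω :=
      fun k => ⋂ l, A l ⁻¹' Set.Ico ((k l:ℝ)/n) (((k l:ℝ)+1)/n) with hcellU
    set Rect' : (Fin L → ℕ) → Set Ω := fun k => ⋂ j, ε j ⁻¹' Set.Iic (dn k j) with hRect'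
    have hkpos : ∀ k ∈ grid', ∀ l, (0:ℝ) < (k l:ℝ)/n := by
      intro k hk l
      have h1 : 1 ≤ k l := (Finset.mem_Ico.1 (Fintype.mem_piFinset.1 hk l)).1
      have h2 : (1:ℝ) ≤ (k l:ℝ) := by exact_mod_cast h1
      exact div_pos (by linarith) hn'
    have hdnpos : ∀ k ∈ grid', ∀ j, 0 < dn k j := by
      intro k hk j
      apply div_pos (hz j)
      apply Real.rpow_pos_of_pos
      exact Finset.sum_pos (fun l _ => mul_pos (hkpos k hk l) (hKpow l j))
        ⟨⟨0, hL⟩, Finset.mem_univ _⟩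
    -- the covering of E
    have cover : E ⊆ (⋃ k ∈ grid', cellU k ∩ Rect' k) ∪
        ((⋃ l, A l ⁻¹' Set.Ico (0:ℝ) (1/(n:ℝ))) ∪ ((⋃ l, A l ⁻¹' Set.Ici ((n:ℝ)))
          ∪ {ω | ¬ ∀ l, 0 < A l ω})) := by
      intro ω hω
      by_cases hg : ∀ l, 0 < A l ω
      swap
      · exact Or.inr (Or.inr (Or.inr hg))
      by_cases hsmall : ∃ l, A l ω < 1/(n:ℝ)
      · obtain ⟨l, hl⟩ := hsmall
        exact Or.inr (Or.inl (Set.mem_iUnion.2 ⟨l, (hg l).le, hl⟩))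
      by_cases hbig : ∃ l, (n:ℝ) ≤ A l ω
      · obtain ⟨l, hl⟩ := hbig
        exact Or.inr (Or.inr (Or.inl (Set.mem_iUnion.2 ⟨l, hl⟩)))
      push_neg at hsmall hbig
      choose kk hk1 hk2 using fun l => aux_mem_Ico n hn (A l ω) (hg l).le (hbig l)
      have hkk1 : ∀ l, 1 ≤ kk l := by
        intro l
        by_contra hcon
        push_neg at hcon
        have h0 : kk l = 0 := by omega
        have h2 := (hk2 l).2
        rw [h0] at h2
        simp only [Nat.cast_zero, zero_add] at h2
        exact absurd h2 (not_lt.2 (hsmall l))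
      have hmemgrid : kk ∈ grid' := by
        rw [hgrid', Fintype.mem_piFinset]
        intro l
        rw [Finset.mem_Ico]
        exact ⟨hkk1 l, hk1 l⟩
      have hrectmem : ∀ j, ω ∈ ε j ⁻¹' Set.Iic (dn kk j) := by
        intro j
        simp only [Set.mem_preimage, Set.mem_Iic]
        have hklpos : ∀ l, (0:ℝ) < (kk l:ℝ)/n := by
          intro l
          have h1 : (1:ℝ) ≤ (kk l:ℝ) := by exact_mod_cast hkk1 l
          exact div_pos (by linarith) hn'
        have hw1 : (0:ℝ) < ∑ l, ((kk l:ℝ)/n) * K l j ^ (1/α) :=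
          Finset.sum_pos (fun l _ => mul_pos (hklpos l) (hKpow l j)) ⟨⟨0, hL⟩, Finset.mem_univ _⟩
        have hsle : ∑ l, ((kk l:ℝ)/n) * K l j ^ (1/α) ≤ ∑ l, A l ω * K l j ^ (1/α) :=
          Finset.sum_le_sum (fun l _ => mul_le_mul_of_nonneg_right (hk2 l).1 (hKpow l j).le)
        have hWdn : (0:ℝ) < (∑ l, ((kk l:ℝ)/n) * K l j ^ (1/α)) ^ α := Real.rpow_pos_of_pos hw1 α
        have hW : (∑ l, ((kk l:ℝ)/n) * K l j ^ (1/α)) ^ α ≤ (∑ l, A l ω * K l j ^ (1/α)) ^ α :=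
          Real.rpow_le_rpow hw1.le hsle hα0.le
        have hWpos : (0:ℝ) < (∑ l, A l ω * K l j ^ (1/α)) ^ α := lt_of_lt_of_le hWdn hW
        have hεle : ε j ω ≤ z j / (∑ l, A l ω * K l j ^ (1/α)) ^ α :=
          (le_div_iff₀ hWpos).2 (hω j)
        rw [hdn]
        calc ε j ω ≤ z j / (∑ l, A l ω * K l j ^ (1/α)) ^ α := hεle
        _ ≤ z j / (∑ l, ((kk l:ℝ)/n) * K l j ^ (1/α)) ^ α := by
              have hzj : (0:ℝ) ≤ z j := (hz j).le
              gcongr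
      left
      exact Set.mem_biUnion hmemgrid
        ⟨Set.mem_iInter.2 (fun l => hk2 l), Set.mem_iInter.2 hrectmem⟩
    -- subadditivity
    have subadd : P E ≤ (∑ k ∈ grid', P (cellU k ∩ Rect' k))
        + ((∑ l, P (A l ⁻¹' Set.Ico (0:ℝ) (1/(n:ℝ)))) + ∑ l, P (A l ⁻¹' Set.Ici ((n:ℝ)))) := by
      refine le_trans (measure_mono cover) ?_
      refine le_trans (measure_union_le _ _) (add_le_add (measure_biUnion_finset_le _ _) ?_)
      refine le_trans (measure_union_le _ _) (add_le_add (measure_iUnion_fintype_le _ _) ?_)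
      refine le_trans (measure_union_le _ _) ?_
      rw [hGpos, add_zero]
      exact measure_iUnion_fintype_le _ _
    -- the value of each piece
    have hval : ∀ k ∈ grid', P (cellU k ∩ Rect' k)
        = ∏ l, (P (A l ⁻¹' Set.Ico ((k l:ℝ)/n) (((k l:ℝ)+1)/n))
            * ENNReal.ofReal (Real.exp (-c l * ((k l:ℝ)/n)))) := by
      intro k hk
      rw [hcellU, hRect']
      rw [rect _ _ (fun l => measurableSet_Ico) (hdnpos k hk)]
      have hpr := prodofReal (fun l => (k l:ℝ)/n) (hkpos k hk)
      simp only [hdn]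
      rw [hpr]
      rw [ENNReal.ofReal_prod_of_nonneg (fun l _ => (Real.exp_pos _).le),
        ← Finset.prod_mul_distrib]
    -- per-l bound for the factor
    have hSup : ∀ l, (∑ k ∈ Finset.Ico 1 (n^2), (P (A l ⁻¹' Set.Ico ((k:ℝ)/n) (((k:ℝ)+1)/n))
          * ENNReal.ofReal (Real.exp (-c l * ((k:ℝ)/n)))))
        ≤ ENNReal.ofReal (Real.exp (c l * (1/(n:ℝ))) * Slow l n) := by
      intro l
      have hterm : ∀ k : ℕ, Real.exp (-c l * ((k:ℝ)/n))
          = Real.exp (c l * (1/(n:ℝ))) * Real.exp (-c l * (((k:ℝ)+1)/n)) := by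
        intro k; rw [← Real.exp_add]; congr 1; field_simp; ring
      have hreal : (∑ k ∈ Finset.Ico 1 (n^2),
          (P (A l ⁻¹' Set.Ico ((k:ℝ)/n) (((k:ℝ)+1)/n))).toReal * Real.exp (-c l * ((k:ℝ)/n)))
          ≤ Real.exp (c l * (1/(n:ℝ))) * Slow l n := by
        calc (∑ k ∈ Finset.Ico 1 (n^2),
            (P (A l ⁻¹' Set.Ico ((k:ℝ)/n) (((k:ℝ)+1)/n))).toReal * Real.exp (-c l * ((k:ℝ)/n)))
            = ∑ k ∈ Finset.Ico 1 (n^2), Real.exp (c l * (1/(n:ℝ)))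
              * ((P (A l ⁻¹' Set.Ico ((k:ℝ)/n) (((k:ℝ)+1)/n))).toReal
                * Real.exp (-c l * (((k:ℝ)+1)/n))) := by
              apply Finset.sum_congr rfl
              intro k _
              rw [hterm k]; ring
        _ = Real.exp (c l * (1/(n:ℝ))) * ∑ k ∈ Finset.Ico 1 (n^2),
              ((P (A l ⁻¹' Set.Ico ((k:ℝ)/n) (((k:ℝ)+1)/n))).toReal
                * Real.exp (-c l * (((k:ℝ)+1)/n))) := by rw [Finset.mul_sum]
        _ ≤ Real.exp (c l * (1/(n:ℝ))) * Slow l n := by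
              apply mul_le_mul_of_nonneg_left ?_ (Real.exp_pos _).le
              rw [hSlowdef]
              apply Finset.sum_le_sum_of_subset_of_nonneg
              · intro k hk
                rw [Finset.mem_range]
                exact (Finset.mem_Ico.1 hk).2
              · intro k _ _
                exact mul_nonneg ENNReal.toReal_nonneg (Real.exp_pos _).le
      calc (∑ k ∈ Finset.Ico 1 (n^2), (P (A l ⁻¹' Set.Ico ((k:ℝ)/n) (((k:ℝ)+1)/n))
            * ENNReal.ofReal (Real.exp (-c l * ((k:ℝ)/n)))))
          = ENNReal.ofReal (∑ k ∈ Finset.Ico 1 (n^2),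
            (P (A l ⁻¹' Set.Ico ((k:ℝ)/n) (((k:ℝ)+1)/n))).toReal
              * Real.exp (-c l * ((k:ℝ)/n))) := by
            rw [ENNReal.ofReal_sum_of_nonneg
              (fun k _ => mul_nonneg ENNReal.toReal_nonneg (Real.exp_pos _).le)]
            apply Finset.sum_congr rfl
            intro k _
            rw [ENNReal.ofReal_mul ENNReal.toReal_nonneg,
              ENNReal.ofReal_toReal (measure_ne_top _ _)]
      _ ≤ ENNReal.ofReal (Real.exp (c l * (1/(n:ℝ))) * Slow l n) :=
            ENNReal.ofReal_le_ofReal hreal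
    -- measure sums as ofReal
    have hms : ∀ (T : Set ℝ), (∑ l, P (A l ⁻¹' T))
        = ENNReal.ofReal (∑ l, (P (A l ⁻¹' T)).toReal) := by
      intro T
      rw [ENNReal.ofReal_sum_of_nonneg (fun l _ => ENNReal.toReal_nonneg)]
      exact Finset.sum_congr rfl (fun l _ => (ENNReal.ofReal_toReal (measure_ne_top _ _)).symm)
    calc P E ≤ (∑ k ∈ grid', P (cellU k ∩ Rect' k))
        + ((∑ l, P (A l ⁻¹' Set.Ico (0:ℝ) (1/(n:ℝ)))) + ∑ l, P (A l ⁻¹' Set.Ici ((n:ℝ)))) :=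
          subadd
    _ = (∏ l, ∑ k ∈ Finset.Ico 1 (n^2), (P (A l ⁻¹' Set.Ico ((k:ℝ)/n) (((k:ℝ)+1)/n))
          * ENNReal.ofReal (Real.exp (-c l * ((k:ℝ)/n)))))
        + ((∑ l, P (A l ⁻¹' Set.Ico (0:ℝ) (1/(n:ℝ)))) + ∑ l, P (A l ⁻¹' Set.Ici ((n:ℝ)))) := by
        congr 1
        calc ∑ k ∈ grid', P (cellU k ∩ Rect' k)
            = ∑ k ∈ grid', ∏ l, (P (A l ⁻¹' Set.Ico ((k l:ℝ)/n) (((k l:ℝ)+1)/n))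
                * ENNReal.ofReal (Real.exp (-c l * ((k l:ℝ)/n)))) := Finset.sum_congr rfl hval
        _ = ∏ l, ∑ k ∈ Finset.Ico 1 (n^2), (P (A l ⁻¹' Set.Ico ((k:ℝ)/n) (((k:ℝ)+1)/n))
                * ENNReal.ofReal (Real.exp (-c l * ((k:ℝ)/n)))) := by
            rw [hgrid']
            exact (Finset.prod_univ_sum (fun _ : Fin L => Finset.Ico 1 (n^2))
              (fun l k => P (A l ⁻¹' Set.Ico ((k:ℝ)/n) (((k:ℝ)+1)/n))
                * ENNReal.ofReal (Real.exp (-c l * ((k:ℝ)/n))))).symm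
    _ ≤ ENNReal.ofReal (∏ l, (Real.exp (c l * (1/(n:ℝ))) * Slow l n))
        + (ENNReal.ofReal (∑ l, (P (A l ⁻¹' Set.Ico (0:ℝ) (1/(n:ℝ)))).toReal)
          + ENNReal.ofReal (∑ l, (P (A l ⁻¹' Set.Ici ((n:ℝ)))).toReal)) := by
        apply add_le_add
        · calc ∏ l, ∑ k ∈ Finset.Ico 1 (n^2), (P (A l ⁻¹' Set.Ico ((k:ℝ)/n) (((k:ℝ)+1)/n))
              * ENNReal.ofReal (Real.exp (-c l * ((k:ℝ)/n))))
              ≤ ∏ l, ENNReal.ofReal (Real.exp (c l * (1/(n:ℝ))) * Slow l n) :=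
                Finset.prod_le_prod' (fun l _ => hSup l)
          _ = ENNReal.ofReal (∏ l, (Real.exp (c l * (1/(n:ℝ))) * Slow l n)) :=
                (ENNReal.ofReal_prod_of_nonneg
                  (fun l _ => mul_nonneg (Real.exp_pos _).le (hSlownn l n))).symm
        · rw [hms (Set.Ico (0:ℝ) (1/(n:ℝ))), hms (Set.Ici ((n:ℝ)))]
    _ = ENNReal.ofReal
        ((∏ l, (Real.exp (c l * (1/(n:ℝ))) * Slow l n))
          + ((∑ l, (P (A l ⁻¹' Set.Ico (0:ℝ) (1/(n:ℝ)))).toReal)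
            + ∑ l, (P (A l ⁻¹' Set.Ici ((n:ℝ)))).toReal)) := by
        rw [← ENNReal.ofReal_add
          (Finset.sum_nonneg (fun l _ => ENNReal.toReal_nonneg))
          (Finset.sum_nonneg (fun l _ => ENNReal.toReal_nonneg))]
        rw [← ENNReal.ofReal_add
          (Finset.prod_nonneg (fun l _ => mul_nonneg (Real.exp_pos _).le (hSlownn l n)))
          (add_nonneg (Finset.sum_nonneg (fun l _ => ENNReal.toReal_nonneg))
            (Finset.sum_nonneg (fun l _ => ENNReal.toReal_nonneg)))]
  -- limits and conclusion
  have hT : ∏ l, Real.exp (-(c l ^ α)) = Real.exp (-(∑ l, c l ^ α)) := by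
    rw [← Real.exp_sum, Finset.sum_neg_distrib]
  have hlowlim : Tendsto (fun n : ℕ => ∏ l, Slow l n) atTop
      (𝓝 (∏ l, Real.exp (-(c l ^ α)))) :=
    tendsto_finset_prod _ (fun l _ => hSlowt l)
  have hup1 : ∀ l, Tendsto (fun n : ℕ => Real.exp (c l * (1/(n:ℝ))) * Slow l n) atTop
      (𝓝 (Real.exp (-(c l ^ α)))) := by
    intro l
    have e1 : Tendsto (fun n : ℕ => Real.exp (c l * (1/(n:ℝ)))) atTop (𝓝 1) := by
      have h0 : Tendsto (fun n : ℕ => c l * (1/(n:ℝ))) atTop (𝓝 0) := by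
        have := tendsto_const_div_atTop_nhds_zero_nat (c l)
        simpa [mul_one_div, div_eq_mul_inv] using this
      simpa [Function.comp_def] using Real.continuous_exp.continuousAt.tendsto.comp h0
    simpa using e1.mul (hSlowt l)
  have huplim : Tendsto (fun n : ℕ =>
      (∏ l, (Real.exp (c l * (1/(n:ℝ))) * Slow l n))
        + ((∑ l, (P (A l ⁻¹' Set.Ico (0:ℝ) (1/(n:ℝ)))).toReal)
          + ∑ l, (P (A l ⁻¹' Set.Ici ((n:ℝ)))).toReal)) atTop
      (𝓝 (∏ l, Real.exp (-(c l ^ α)))) := by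
    have p1 : Tendsto (fun n : ℕ => ∏ l, (Real.exp (c l * (1/(n:ℝ))) * Slow l n)) atTop
        (𝓝 (∏ l, Real.exp (-(c l ^ α)))) := tendsto_finset_prod _ (fun l _ => hup1 l)
    have p2 : Tendsto (fun n : ℕ => ∑ l, (P (A l ⁻¹' Set.Ico (0:ℝ) (1/(n:ℝ)))).toReal)
        atTop (𝓝 0) := by
      have := tendsto_finset_sum Finset.univ (fun l (_ : l ∈ Finset.univ) => hm0t l)
      simpa using this
    have p3 : Tendsto (fun n : ℕ => ∑ l, (P (A l ⁻¹' Set.Ici ((n:ℝ)))).toReal)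
        atTop (𝓝 0) := by
      have := tendsto_finset_sum Finset.univ (fun l (_ : l ∈ Finset.univ) => htailt l)
      simpa using this
    have := p1.add (p2.add p3)
    simpa using this
  have hle1 : ENNReal.ofReal (Real.exp (-(∑ l, c l ^ α))) ≤ P E := by
    rw [← hT]
    apply le_of_tendsto (ENNReal.tendsto_ofReal hlowlim)
    filter_upwards [eventually_ge_atTop 1] with n hn
    exact lower n hn
  have hle2 : P E ≤ ENNReal.ofReal (Real.exp (-(∑ l, c l ^ α))) := by
    rw [← hT]
    apply ge_of_tendsto (ENNReal.tendsto_ofReal huplim)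
    filter_upwards [eventually_ge_atTop 1] with n hn
    exact upper n hn
  have final : P E = ENNReal.ofReal (Real.exp (-(∑ l, c l ^ α))) := le_antisymm hle2 hle1
  rw [final]
end

section
/- Under the Reich–Shaby construction with the sum-to-one constraint Σ_{l=1}^L K_l(s) = 1 for all s, each marginal distribution of Z(s) is unit Fréchet: Pr(Z(s) ≤ z) = exp(-1/z) for all z > 0. -/
open MeasureTheory ProbabilityTheory Real
open Filter

section aux

variable {Ω : Type*} [MeasurableSpace Ω] {P : Measure Ω}

lemma RS_ae_set_eq {s t : Set Ω} (h : ∀ᵐ ω ∂P, ω ∈ s ↔ ω ∈ t) : s =ᵐ[P] t :=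
  h.mono fun _ hω => eq_iff_iff.2 hω

/-- Step-function factorization identity. -/
lemma RS_step (P : Measure Ω) [IsProbabilityMeasure P] (ε c : Ω → ℝ) (hc : Measurable c)
    (F : ℝ → ℝ)
    (hfac : ∀ t : ℝ, ∀ B : Set ℝ, MeasurableSet B →
      P ({ω | ε ω ≤ t} ∩ c ⁻¹' B) = ENNReal.ofReal (F t) * P (c ⁻¹' B))
    (e : ℝ → ℤ) (he : Measurable e) (ρ : ℤ → ℝ) :
    P {ω | ε ω ≤ ρ (e (c ω))} = ∫⁻ ω, ENNReal.ofReal (F (ρ (e (c ω)))) ∂P := by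
  classical
  set T : Set Ω := {ω | ε ω ≤ ρ (e (c ω))} with hT
  set M : ℤ → Set Ω := fun k => c ⁻¹' (e ⁻¹' {k}) with hM
  have hMmeas : ∀ k, MeasurableSet (M k) := fun k => hc (he (measurableSet_singleton k))
  have hMdisj : Pairwise (Function.onFun Disjoint M) := by
    intro i j hij
    refine Set.disjoint_left.2 fun ω hi hj => hij ?_
    have h1 : e (c ω) = i := hi
    have h2 : e (c ω) = j := hj
    rw [← h1, h2]
  have hMunion : (⋃ k, M k) = Set.univ := by
    ext ω; simp [hM]
  have hTM : ∀ k, M k ∩ T = {ω | ε ω ≤ ρ k} ∩ M k := by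
    intro k
    ext ω
    constructor
    · rintro ⟨h1, h2⟩
      have hk : e (c ω) = k := h1
      refine ⟨?_, h1⟩
      have h2' : ε ω ≤ ρ (e (c ω)) := h2
      simpa [hk] using h2'
    · rintro ⟨h2, h1⟩
      have hk : e (c ω) = k := h1
      refine ⟨h1, ?_⟩
      show ε ω ≤ ρ (e (c ω))
      simpa [hk] using h2
  have hL : P T = ∑' k : ℤ, P (M k ∩ T) := by
    have h1 : P T = (P.restrict T) Set.univ := by
      rw [Measure.restrict_apply MeasurableSet.univ, Set.univ_inter]
    rw [h1, ← hMunion, measure_iUnion hMdisj hMmeas]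
    exact tsum_congr fun k => Measure.restrict_apply (hMmeas k)
  have hR : ∫⁻ ω, ENNReal.ofReal (F (ρ (e (c ω)))) ∂P
      = ∑' k : ℤ, ENNReal.ofReal (F (ρ k)) * P (M k) := by
    have h1 : ∫⁻ ω, ENNReal.ofReal (F (ρ (e (c ω)))) ∂P
        = ∫⁻ ω in ⋃ k, M k, ENNReal.ofReal (F (ρ (e (c ω)))) ∂P := by
      rw [hMunion, Measure.restrict_univ]
    rw [h1, lintegral_iUnion hMmeas hMdisj]
    refine tsum_congr fun k => ?_
    have h2 : ∫⁻ ω in M k, ENNReal.ofReal (F (ρ (e (c ω)))) ∂P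
        = ∫⁻ _ω in M k, ENNReal.ofReal (F (ρ k)) ∂P := by
      refine setLIntegral_congr_fun (hMmeas k) (fun ω hω => ?_)
      have hk : e (c ω) = k := hω
      rw [hk]
    rw [h2, setLIntegral_const]
  rw [hL, hR]
  refine tsum_congr fun k => ?_
  rw [hTM k, hfac (ρ k) (e ⁻¹' {k}) (he (measurableSet_singleton k))]

end aux

section aux2

variable {Ω : Type*} [MeasurableSpace Ω] {P : Measure Ω}

lemma RS_cdf_comp (P : Measure Ω) [IsProbabilityMeasure P] (ε c : Ω → ℝ) (hc : Measurable c)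
    (F : ℝ → ℝ) (hF1 : ∀ t, F t ≤ 1)
    (hFcont : ∀ᵐ ω ∂P, ContinuousAt F (c ω))
    (hfac : ∀ t : ℝ, ∀ B : Set ℝ, MeasurableSet B →
      P ({ω | ε ω ≤ t} ∩ c ⁻¹' B) = ENNReal.ofReal (F t) * P (c ⁻¹' B)) :
    P {ω | ε ω ≤ c ω} = ∫⁻ ω, ENNReal.ofReal (F (c ω)) ∂P := by
  classical
  -- dyadic approximations
  set e : ℕ → ℝ → ℤ := fun n x => ⌊x * 2 ^ n⌋ with he_def
  have he : ∀ n, Measurable (e n) := fun n => (measurable_id.mul_const _).floor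
  set ρ : ℕ → ℤ → ℝ := fun n k => (k : ℝ) / 2 ^ n with hρ_def
  set ρ' : ℕ → ℤ → ℝ := fun n k => ((k : ℝ) + 1) / 2 ^ n with hρ'_def
  have h2pos : ∀ n : ℕ, (0:ℝ) < 2 ^ n := fun n => by positivity
  have hlow : ∀ n ω, ρ n (e n (c ω)) ≤ c ω := by
    intro n ω
    rw [div_le_iff₀ (h2pos n)]
    exact Int.floor_le _
  have hexp : ∀ n : ℕ, ((1:ℝ)/2) ^ n * 2 ^ n = 1 := by
    intro n
    rw [one_div, inv_pow, inv_mul_cancel₀ (h2pos n).ne']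
  have hlow2 : ∀ n ω, c ω - (1/2) ^ n ≤ ρ n (e n (c ω)) := by
    intro n ω
    rw [le_div_iff₀ (h2pos n)]
    have h1 : c ω * 2 ^ n < (⌊c ω * 2 ^ n⌋ : ℝ) + 1 := Int.lt_floor_add_one _
    have h2 : (c ω - (1/2) ^ n) * 2 ^ n = c ω * 2 ^ n - 1 := by
      rw [sub_mul, hexp n]
    show (c ω - (1/2) ^ n) * 2 ^ n ≤ ((⌊c ω * 2 ^ n⌋ : ℤ) : ℝ)
    linarith
  have hhigh : ∀ n ω, c ω ≤ ρ' n (e n (c ω)) := by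
    intro n ω
    rw [le_div_iff₀ (h2pos n)]
    exact (Int.lt_floor_add_one _).le
  have hhigh2 : ∀ n ω, ρ' n (e n (c ω)) ≤ c ω + (1/2) ^ n := by
    intro n ω
    rw [div_le_iff₀ (h2pos n)]
    have h1 : (⌊c ω * 2 ^ n⌋ : ℝ) ≤ c ω * 2 ^ n := Int.floor_le _
    have h2 : (c ω + (1/2) ^ n) * 2 ^ n = c ω * 2 ^ n + 1 := by
      rw [add_mul, hexp n]
    linarith
  have hhalf : Tendsto (fun n : ℕ => ((1:ℝ)/2) ^ n) atTop (nhds 0) :=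
    tendsto_pow_atTop_nhds_zero_of_lt_one (by norm_num) (by norm_num)
  -- pointwise convergence of dyadic values
  have htendlow : ∀ ω, Tendsto (fun n => ρ n (e n (c ω))) atTop (nhds (c ω)) := by
    intro ω
    refine tendsto_of_tendsto_of_tendsto_of_le_of_le
      (g := fun n : ℕ => c ω - (1/2) ^ n) (h := fun _ : ℕ => c ω) ?_ ?_
      (fun n => hlow2 n ω) (fun n => hlow n ω)
    · simpa using (tendsto_const_nhds.sub hhalf)
    · exact tendsto_const_nhds
  have htendhigh : ∀ ω, Tendsto (fun n => ρ' n (e n (c ω))) atTop (nhds (c ω)) := by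
    intro ω
    refine tendsto_of_tendsto_of_tendsto_of_le_of_le
      (g := fun _ : ℕ => c ω) (h := fun n : ℕ => c ω + (1/2) ^ n) tendsto_const_nhds ?_
      (fun n => hhigh n ω) (fun n => hhigh2 n ω)
    · simpa using (tendsto_const_nhds.add hhalf)
  -- dominated convergence for both approximations
  have hmeaslow : ∀ n, Measurable fun ω => ENNReal.ofReal (F (ρ n (e n (c ω)))) := by
    intro n
    exact (measurable_of_countable fun k : ℤ => ENNReal.ofReal (F (ρ n k))).comp
      ((he n).comp hc)
  have hmeashigh : ∀ n, Measurable fun ω => ENNReal.ofReal (F (ρ' n (e n (c ω)))) := by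
    intro n
    exact (measurable_of_countable fun k : ℤ => ENNReal.ofReal (F (ρ' n k))).comp
      ((he n).comp hc)
  have hbound : ∀ (x : ℝ), ENNReal.ofReal (F x) ≤ 1 := fun x =>
    ENNReal.ofReal_le_one.mpr (hF1 x)
  have hfin : ∫⁻ _ω, (1:ENNReal) ∂P ≠ ⊤ := by simp
  have hDCTlow : Tendsto (fun n => ∫⁻ ω, ENNReal.ofReal (F (ρ n (e n (c ω)))) ∂P) atTop
      (nhds (∫⁻ ω, ENNReal.ofReal (F (c ω)) ∂P)) := by
    refine tendsto_lintegral_of_dominated_convergence (fun _ => 1) hmeaslow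
      (fun n => Eventually.of_forall fun ω => hbound _) hfin ?_
    filter_upwards [hFcont] with ω hω
    exact (ENNReal.continuous_ofReal.continuousAt.tendsto.comp
      (hω.tendsto.comp (htendlow ω)))
  have hDCThigh : Tendsto (fun n => ∫⁻ ω, ENNReal.ofReal (F (ρ' n (e n (c ω)))) ∂P) atTop
      (nhds (∫⁻ ω, ENNReal.ofReal (F (c ω)) ∂P)) := by
    refine tendsto_lintegral_of_dominated_convergence (fun _ => 1) hmeashigh
      (fun n => Eventually.of_forall fun ω => hbound _) hfin ?_
    filter_upwards [hFcont] with ω hω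
    exact (ENNReal.continuous_ofReal.continuousAt.tendsto.comp
      (hω.tendsto.comp (htendhigh ω)))
  -- squeeze
  have hstep_low : ∀ n, P {ω | ε ω ≤ ρ n (e n (c ω))}
      = ∫⁻ ω, ENNReal.ofReal (F (ρ n (e n (c ω)))) ∂P := fun n =>
    RS_step P ε c hc F hfac (e n) (he n) (ρ n)
  have hstep_high : ∀ n, P {ω | ε ω ≤ ρ' n (e n (c ω))}
      = ∫⁻ ω, ENNReal.ofReal (F (ρ' n (e n (c ω)))) ∂P := fun n =>
    RS_step P ε c hc F hfac (e n) (he n) (ρ' n)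
  have hmono_low : ∀ n, P {ω | ε ω ≤ ρ n (e n (c ω))} ≤ P {ω | ε ω ≤ c ω} := by
    intro n
    exact measure_mono fun ω (hω : ε ω ≤ _) => le_trans hω (hlow n ω)
  have hmono_high : ∀ n, P {ω | ε ω ≤ c ω} ≤ P {ω | ε ω ≤ ρ' n (e n (c ω))} := by
    intro n
    exact measure_mono fun ω (hω : ε ω ≤ _) => le_trans hω (hhigh n ω)
  refine le_antisymm ?_ ?_
  · exact ge_of_tendsto hDCThigh (Eventually.of_forall fun n =>
      (hstep_high n) ▸ hmono_high n)
  · exact le_of_tendsto hDCTlow (Eventually.of_forall fun n =>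
      (hstep_low n) ▸ hmono_low n)

end aux2

/-- Under the Reich–Shaby construction with the sum-to-one
constraint Σ_l K_l(s) = 1, the marginal distribution of
Z(s) = ε(s)·(Σ_l A_l K_l(s)^{1/α})^α is unit Fréchet:
Pr(Z(s) ≤ z) = exp(-1/z) for all z > 0. -/
theorem reich_shaby_unit_frechet_margins
    {Ω : Type*} [MeasurableSpace Ω] (P : Measure Ω) [IsProbabilityMeasure P]
    (L : ℕ) (hL : 0 < L)
    (α : ℝ) (hα : α ∈ Set.Ioo (0:ℝ) 1)
    (A : Fin L → Ω → ℝ) (ε : Ω → ℝ)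
    (K : Fin L → ℝ) (hK : ∀ l, 0 ≤ K l) (hKsum : ∑ l, K l = 1)
    -- A_1,…,A_L and ε are mutually independent:
    (hindep : iIndepFun (m := fun _ : Fin L ⊕ Unit => (inferInstance : MeasurableSpace ℝ))
      (Sum.elim A (fun _ => ε)) P)
    (hApos : ∀ l, ∀ᵐ ω ∂P, 0 < A l ω)
    (hA_laplace : ∀ l, ∀ s : ℝ, 0 ≤ s →
      ∫ ω, Real.exp (-s * A l ω) ∂P = Real.exp (-(s ^ α)))
    (hε : ∀ z : ℝ, 0 < z →
      P {ω | ε ω ≤ z} = ENNReal.ofReal (Real.exp (-(z ^ (-(1/α)))))) :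
    ∀ z : ℝ, 0 < z →
      P {ω | ε ω * (∑ l, A l ω * K l ^ (1/α)) ^ α ≤ z}
        = ENNReal.ofReal (Real.exp (-(1 / z))) := by
  classical
  obtain ⟨hα0, hα1⟩ := hα
  intro z hz
  -- measurable versions of the A l
  have hAmeas : ∀ l, AEMeasurable (A l) P := by
    intro l
    have h1 := hA_laplace l 1 zero_le_one
    have h2 : Integrable (fun ω => Real.exp (-1 * A l ω)) P := by
      by_contra hcon
      rw [integral_undef hcon] at h1
      exact absurd h1.symm (Real.exp_ne_zero _)
    have h3 : AEMeasurable (fun ω => Real.exp (-1 * A l ω)) P := h2.aemeasurable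
    have h4 : AEMeasurable (fun ω => -Real.log (Real.exp (-1 * A l ω))) P :=
      (Real.measurable_log.comp_aemeasurable h3).neg
    refine AEMeasurable.congr h4 (Filter.Eventually.of_forall fun ω => ?_)
    show -Real.log (Real.exp (-1 * A l ω)) = A l ω
    rw [Real.log_exp]; ring
  set A' : Fin L → Ω → ℝ := fun l => (hAmeas l).mk (A l) with hA'def
  have hA'meas : ∀ l, Measurable (A' l) := fun l => (hAmeas l).measurable_mk
  have hAA' : ∀ l, A l =ᵐ[P] A' l := fun l => (hAmeas l).ae_eq_mk
  have hallAA' : ∀ᵐ ω ∂P, ∀ l, A l ω = A' l ω := ae_all_iff.mpr hAA'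
  have hA'pos : ∀ᵐ ω ∂P, ∀ l, 0 < A' l ω := by
    filter_upwards [hallAA', ae_all_iff.mpr hApos] with ω h1 h2 l
    rw [← h1 l]; exact h2 l
  -- a strictly positive kernel weight exists
  have hKex : ∃ l₀ : Fin L, 0 < K l₀ := by
    by_contra hcon
    push_neg at hcon
    have : ∀ l : Fin L, K l = 0 := fun l => le_antisymm (hcon l) (hK l)
    rw [Finset.sum_congr rfl fun l _ => this l] at hKsum
    simp at hKsum
  obtain ⟨l₀, hl₀⟩ := hKex
  -- the sum U
  set U : Ω → ℝ := fun ω => ∑ l, A' l ω * K l ^ (1/α) with hUdef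
  have hUmeas : Measurable U :=
    Finset.measurable_sum _ fun l _ => (hA'meas l).mul_const _
  have hUpos : ∀ᵐ ω ∂P, 0 < U ω := by
    filter_upwards [hA'pos] with ω h1
    refine Finset.sum_pos' (fun l _ => mul_nonneg (h1 l).le (Real.rpow_nonneg (hK l) _)) ?_
    exact ⟨l₀, Finset.mem_univ _, mul_pos (h1 l₀) (Real.rpow_pos_of_pos hl₀ _)⟩
  -- ε is a.s. positive
  have hε0 : P {ω | ε ω ≤ 0} = 0 := by
    have hkey : ∀ n : ℕ, P {ω | ε ω ≤ 0}
        ≤ ENNReal.ofReal (Real.exp (-(((1:ℝ)/(n+1)) ^ (-(1/α))))) := by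
      intro n
      have hpos : (0:ℝ) < 1/(n+1) := by positivity
      rw [← hε (1/(n+1)) hpos]
      exact measure_mono fun ω (hω : ε ω ≤ 0) => le_trans hω hpos.le
    have htend : Filter.Tendsto
        (fun n : ℕ => ENNReal.ofReal (Real.exp (-(((1:ℝ)/(n+1)) ^ (-(1/α)))))) Filter.atTop
        (nhds 0) := by
      have h1 : Filter.Tendsto (fun n : ℕ => ((1:ℝ)/(n+1)) ^ (-(1/α))) Filter.atTop
          Filter.atTop := by
        have h2 : Filter.Tendsto (fun n : ℕ => ((n:ℝ)+1) ^ ((1:ℝ)/α)) Filter.atTop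
            Filter.atTop :=
          (tendsto_rpow_atTop (by positivity)).comp
            (Filter.tendsto_atTop_add_const_right _ 1 tendsto_natCast_atTop_atTop)
        refine h2.congr fun n => ?_
        have hn : (0:ℝ) < (n:ℝ)+1 := by positivity
        rw [one_div ((n:ℝ)+1), Real.inv_rpow hn.le, Real.rpow_neg (by positivity), inv_inv]
      have h3 : Filter.Tendsto (fun n : ℕ => Real.exp (-(((1:ℝ)/(n+1)) ^ (-(1/α)))))
          Filter.atTop (nhds 0) := Real.tendsto_exp_neg_atTop_nhds_zero.comp h1
      have := (ENNReal.continuous_ofReal.tendsto 0).comp h3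
      simpa [Function.comp_def] using this
    have := ge_of_tendsto htend (Filter.Eventually.of_forall hkey)
    simpa using this
  have hεle : ∀ t : ℝ, t ≤ 0 → P {ω | ε ω ≤ t} = 0 := by
    intro t ht
    have hsub : {ω | ε ω ≤ t} ⊆ {ω | ε ω ≤ 0} := fun ω hω => le_trans hω ht
    have h5 := measure_mono (μ := P) hsub
    rw [hε0] at h5
    exact le_antisymm h5 zero_le
  -- the Fréchet cdf
  set F : ℝ → ℝ := fun t => if 0 < t then Real.exp (-(t ^ (-(1/α)))) else 0 with hFdef
  have hF1 : ∀ t, F t ≤ 1 := by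
    intro t
    by_cases ht : 0 < t
    · simp only [hFdef, if_pos ht]
      exact Real.exp_le_one_iff.mpr (neg_nonpos.mpr (Real.rpow_nonneg ht.le _))
    · simp only [hFdef, if_neg ht]
      exact zero_le_one
  have hεF : ∀ t : ℝ, P {ω | ε ω ≤ t} = ENNReal.ofReal (F t) := by
    intro t
    rcases lt_or_ge 0 t with ht | ht
    · rw [hε t ht]
      simp only [hFdef, if_pos ht]
    · rw [hεle t ht]
      simp only [hFdef, if_neg (not_lt.mpr ht)]
      simp
  have hFcontAt : ∀ x : ℝ, 0 < x → ContinuousAt F x := by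
    intro x hx
    have h1 : ContinuousAt (fun t : ℝ => Real.exp (-(t ^ (-(1/α))))) x :=
      Real.continuous_exp.continuousAt.comp
        ((Real.continuousAt_rpow_const x _ (Or.inl hx.ne')).neg)
    refine h1.congr ?_
    filter_upwards [eventually_gt_nhds hx] with t ht
    simp only [hFdef, if_pos ht]
  -- the vector map and c
  set vec : Ω → (Fin L → ℝ) := fun ω l => A' l ω with hvecdef
  have hvec : Measurable vec := measurable_pi_lambda _ fun l => hA'meas l
  have hrpowα : Measurable fun x : ℝ => x ^ α :=
    (continuous_iff_continuousAt.mpr fun x =>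
      Real.continuousAt_rpow_const x α (Or.inr hα0.le)).measurable
  set g : (Fin L → ℝ) → ℝ := fun v => z / (∑ l, v l * K l ^ (1/α)) ^ α with hgdef
  have hg : Measurable g := by
    refine Measurable.const_div ?_ z
    exact hrpowα.comp (Finset.measurable_sum _ fun l _ => (measurable_pi_apply l).mul_const _)
  set c : Ω → ℝ := fun ω => g (vec ω) with hcdef
  have hc : Measurable c := hg.comp hvec
  have hcU : ∀ ω, c ω = z / U ω ^ α := fun ω => rfl
  have hcpos : ∀ᵐ ω ∂P, 0 < c ω := by
    filter_upwards [hUpos] with ω h1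
    rw [hcU ω]
    exact div_pos hz (Real.rpow_pos_of_pos h1 α)
  -- a.e. transfers between A and A'
  have haeInter : ∀ (B : Fin L → Set ℝ),
      ((⋂ l, A' l ⁻¹' B l) : Set Ω) =ᵐ[P] ((⋂ l, A l ⁻¹' B l) : Set Ω) := by
    intro B
    refine RS_ae_set_eq ?_
    filter_upwards [hallAA'] with ω h
    simp only [Set.mem_iInter, Set.mem_preimage]
    constructor <;> intro h2 l
    · rw [h l]; exact h2 l
    · rw [← h l]; exact h2 l
  have haeInterT : ∀ (t : ℝ) (B : Fin L → Set ℝ),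
      (((⋂ l, A' l ⁻¹' B l) ∩ {ω | ε ω ≤ t}) : Set Ω)
        =ᵐ[P] (((⋂ l, A l ⁻¹' B l) ∩ {ω | ε ω ≤ t}) : Set Ω) := by
    intro t B
    refine RS_ae_set_eq ?_
    filter_upwards [hallAA'] with ω h
    simp only [Set.mem_inter_iff, Set.mem_iInter, Set.mem_preimage]
    constructor <;> rintro ⟨h2, h3⟩ <;> refine ⟨fun l => ?_, h3⟩
    · rw [h l]; exact h2 l
    · rw [← h l]; exact h2 l
  -- independence: product rule for the A's
  have hprodA : ∀ (B : Fin L → Set ℝ), (∀ l, MeasurableSet (B l)) →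
      P (⋂ l, A l ⁻¹' B l) = ∏ l, P (A l ⁻¹' B l) := by
    intro B hB
    have h1 := hindep.meas_iInter
      (s := fun i => Sum.elim (fun l => A l ⁻¹' B l) (fun _ => Set.univ) i) ?_
    · have h2 : (⋂ i : Fin L ⊕ Unit, Sum.elim (fun l => A l ⁻¹' B l) (fun _ => Set.univ) i)
          = ⋂ l, A l ⁻¹' B l := by
        rw [Set.iInter_sum]
        simp only [Sum.elim_inl, Sum.elim_inr, Set.iInter_const, Set.inter_univ]
      rw [h2, Fintype.prod_sum_type] at h1
      simp only [Sum.elim_inl, Sum.elim_inr] at h1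
      rw [h1]
      simp
    · rintro (l | u)
      · exact ⟨B l, hB l, rfl⟩
      · exact ⟨Set.univ, MeasurableSet.univ, by simp⟩
  -- independence: rectangles times the ε event
  have hrectA : ∀ (t : ℝ) (B : Fin L → Set ℝ), (∀ l, MeasurableSet (B l)) →
      P ((⋂ l, A l ⁻¹' B l) ∩ {ω | ε ω ≤ t})
        = (∏ l, P (A l ⁻¹' B l)) * P {ω | ε ω ≤ t} := by
    intro t B hB
    have h1 := hindep.meas_iInter
      (s := fun i => Sum.elim (fun l => A l ⁻¹' B l) (fun _ => ε ⁻¹' Set.Iic t) i) ?_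
    · have h2 : (⋂ i : Fin L ⊕ Unit, Sum.elim (fun l => A l ⁻¹' B l) (fun _ => ε ⁻¹' Set.Iic t) i)
          = (⋂ l, A l ⁻¹' B l) ∩ {ω | ε ω ≤ t} := by
        rw [Set.iInter_sum]
        simp only [Sum.elim_inl, Sum.elim_inr, Set.iInter_const]
        rfl
      rw [h2, Fintype.prod_sum_type] at h1
      simp only [Sum.elim_inl, Sum.elim_inr] at h1
      rw [h1]
      congr 1
      rw [Fintype.prod_unique]
      rfl
    · rintro (l | u)
      · exact ⟨B l, hB l, rfl⟩
      · exact ⟨Set.Iic t, measurableSet_Iic, rfl⟩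
  -- rectangles with the measurable versions A'
  have hrect' : ∀ (t : ℝ), ∀ (B : Fin L → Set ℝ), (∀ l, MeasurableSet (B l)) →
      P ((⋂ l, A' l ⁻¹' B l) ∩ {ω | ε ω ≤ t})
        = ENNReal.ofReal (F t) * P (⋂ l, A' l ⁻¹' B l) := by
    intro t B hB
    rw [measure_congr (haeInterT t B), measure_congr (haeInter B), hrectA t B hB,
      ← hprodA B hB, hεF t, mul_comm]
  -- the key factorization for events defined through c
  have hfac : ∀ (t : ℝ), ∀ (B : Set ℝ), MeasurableSet B →
      P ({ω | ε ω ≤ t} ∩ c ⁻¹' B) = ENNReal.ofReal (F t) * P (c ⁻¹' B) := by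
    intro t B hB
    set μ1 : Measure (Fin L → ℝ) := (P.restrict {ω | ε ω ≤ t}).map vec with hμ1
    set μ2 : Measure (Fin L → ℝ) := ENNReal.ofReal (F t) • (P.map vec) with hμ2
    haveI hfin1 : IsFiniteMeasure μ1 := by
      constructor
      rw [hμ1, Measure.map_apply hvec MeasurableSet.univ, Set.preimage_univ,
        Measure.restrict_apply MeasurableSet.univ, Set.univ_inter]
      exact measure_lt_top _ _
    haveI hfin2 : IsFiniteMeasure μ2 := by
      constructor
      rw [hμ2, Measure.smul_apply, smul_eq_mul]
      exact ENNReal.mul_lt_top ENNReal.ofReal_lt_top (measure_lt_top _ _)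
    have hμeq : μ1 = μ2 := by
      refine ext_of_generate_finite _ generateFrom_pi.symm
        isPiSystem_pi ?_ ?_
      · rintro s ⟨B', hB', rfl⟩
        have hB'l : ∀ l, MeasurableSet (B' l) := fun l => hB' l (Set.mem_univ l)
        have hmeas_pi : MeasurableSet (Set.pi Set.univ B') :=
          MeasurableSet.pi Set.countable_univ fun l _ => hB'l l
        have hpre : vec ⁻¹' Set.pi Set.univ B' = ⋂ l, A' l ⁻¹' B' l := by
          ext ω
          simp [hvecdef, Set.mem_pi]
        rw [hμ1, hμ2, Measure.map_apply hvec hmeas_pi,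
          Measure.restrict_apply (hvec hmeas_pi), hpre, Measure.smul_apply, smul_eq_mul,
          Measure.map_apply hvec hmeas_pi, hpre]
        exact hrect' t B' hB'l
      · rw [hμ1, hμ2, Measure.map_apply hvec MeasurableSet.univ, Set.preimage_univ,
          Measure.restrict_apply MeasurableSet.univ, Set.univ_inter, Measure.smul_apply,
          smul_eq_mul, Measure.map_apply hvec MeasurableSet.univ, Set.preimage_univ,
          measure_univ, mul_one, hεF t]
    have h5 : P ({ω | ε ω ≤ t} ∩ c ⁻¹' B) = μ1 (g ⁻¹' B) := by
      calc P ({ω | ε ω ≤ t} ∩ c ⁻¹' B)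
          = P (vec ⁻¹' (g ⁻¹' B) ∩ {ω | ε ω ≤ t}) := by rw [Set.inter_comm]; rfl
        _ = (P.restrict {ω | ε ω ≤ t}) (vec ⁻¹' (g ⁻¹' B)) :=
            (Measure.restrict_apply (hvec (hg hB))).symm
        _ = μ1 (g ⁻¹' B) := (Measure.map_apply hvec (hg hB)).symm
    rw [h5, hμeq, hμ2, Measure.smul_apply, smul_eq_mul,
      Measure.map_apply hvec (hg hB)]
    rfl
  -- main computation of the cdf of the target variable
  have hcont_ae : ∀ᵐ ω ∂P, ContinuousAt F (c ω) := hcpos.mono fun ω h => hFcontAt _ h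
  have hmain : P {ω | ε ω ≤ c ω} = ∫⁻ ω, ENNReal.ofReal (F (c ω)) ∂P :=
    RS_cdf_comp P ε c hc F hF1 hcont_ae hfac
  have htargetset : P {ω | ε ω * (∑ l, A l ω * K l ^ (1/α)) ^ α ≤ z}
      = P {ω | ε ω ≤ c ω} := by
    refine measure_congr (RS_ae_set_eq ?_)
    filter_upwards [hallAA', hUpos] with ω h1 h2
    have hsum : (∑ l, A l ω * K l ^ (1/α)) = U ω :=
      Finset.sum_congr rfl fun l _ => by rw [h1 l]
    have hUα : 0 < U ω ^ α := Real.rpow_pos_of_pos h2 α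
    show ε ω * (∑ l, A l ω * K l ^ (1/α)) ^ α ≤ z ↔ ε ω ≤ c ω
    rw [hsum, hcU ω, le_div_iff₀ hUα]
  set s₀ : ℝ := z ^ (-(1/α)) with hs₀def
  have hs₀ : 0 < s₀ := Real.rpow_pos_of_pos hz _
  have hFc : ∀ᵐ ω ∂P, ENNReal.ofReal (F (c ω))
      = ENNReal.ofReal (Real.exp (-(s₀ * U ω))) := by
    filter_upwards [hUpos] with ω h2
    have hcω : 0 < c ω := by
      rw [hcU ω]; exact div_pos hz (Real.rpow_pos_of_pos h2 α)
    have hkey : c ω ^ (-(1/α)) = s₀ * U ω := by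
      rw [hcU ω, Real.div_rpow hz.le (Real.rpow_nonneg h2.le α),
        ← Real.rpow_mul h2.le]
      have hm1 : α * -(1/α) = -1 := by field_simp
      rw [hm1, Real.rpow_neg_one, div_eq_mul_inv, inv_inv, hs₀def]
    have : F (c ω) = Real.exp (-(s₀ * U ω)) := by
      simp only [hFdef, if_pos hcω, hkey]
    rw [this]
  have hlint : ∫⁻ ω, ENNReal.ofReal (F (c ω)) ∂P
      = ∫⁻ ω, ENNReal.ofReal (Real.exp (-(s₀ * U ω))) ∂P := lintegral_congr_ae hFc
  have hInt : Integrable (fun ω => Real.exp (-(s₀ * U ω))) P := by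
    have hm : Measurable fun ω => Real.exp (-(s₀ * U ω)) := (hUmeas.const_mul s₀).neg.exp
    refine Integrable.mono' (integrable_const 1) hm.aestronglyMeasurable ?_
    filter_upwards [hUpos] with ω h2
    rw [Real.norm_eq_abs, abs_of_pos (Real.exp_pos _)]
    exact Real.exp_le_one_iff.mpr (neg_nonpos.mpr (mul_nonneg hs₀.le h2.le))
  have hof : ∫⁻ ω, ENNReal.ofReal (Real.exp (-(s₀ * U ω))) ∂P
      = ENNReal.ofReal (∫ ω, Real.exp (-(s₀ * U ω)) ∂P) :=
    (ofReal_integral_eq_lintegral_ofReal hInt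
      (Filter.Eventually.of_forall fun ω => (Real.exp_pos _).le)).symm
  -- the X's and their independence
  set X : Fin L → Ω → ℝ := fun l ω => K l ^ (1/α) * A' l ω with hXdef
  have hXmeas : ∀ l, Measurable (X l) := fun l => (hA'meas l).const_mul _
  have hindepA' : iIndepFun (m := fun _ : Fin L => (inferInstance : MeasurableSpace ℝ)) A' P := by
    rw [iIndepFun_iff_measure_inter_preimage_eq_mul]
    intro S sets hsets
    have h1 : (⋂ l ∈ S, A' l ⁻¹' sets l : Set Ω) =ᵐ[P] (⋂ l ∈ S, A l ⁻¹' sets l : Set Ω) := by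
      refine RS_ae_set_eq ?_
      filter_upwards [hallAA'] with ω h
      simp only [Set.mem_iInter, Set.mem_preimage]
      constructor <;> intro h2 l hl
      · rw [h l]; exact h2 l hl
      · rw [← h l]; exact h2 l hl
    rw [measure_congr h1]
    have h2 := hindep.meas_biInter (S := S.image (Sum.inl : Fin L → Fin L ⊕ Unit))
      (s := fun i => Sum.elim (fun l => A l ⁻¹' sets l) (fun _ => Set.univ) i) ?_
    · have h3 : (⋂ i ∈ S.image (Sum.inl : Fin L → Fin L ⊕ Unit),
            Sum.elim (fun l => A l ⁻¹' sets l) (fun _ => Set.univ) i)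
          = ⋂ l ∈ S, A l ⁻¹' sets l := by
        rw [Finset.set_biInter_finset_image]
        simp only [Sum.elim_inl]
      rw [h3] at h2
      rw [h2, Finset.prod_image (fun x _ y _ h => Sum.inl.inj h)]
      refine Finset.prod_congr rfl fun l hl => ?_
      refine measure_congr (RS_ae_set_eq ?_)
      filter_upwards [hAA' l] with ω h
      simp only [Sum.elim_inl, Set.mem_preimage, h]
    · intro i hi
      rcases i with l | u
      · obtain ⟨a, ha, hae⟩ := Finset.mem_image.mp hi
        have haa : a = l := Sum.inl.inj hae
        subst haa
        exact ⟨sets a, hsets a ha, rfl⟩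
      · obtain ⟨a, ha, hae⟩ := Finset.mem_image.mp hi
        exact absurd hae (by simp)
  have hindepX : iIndepFun (m := fun _ : Fin L => (inferInstance : MeasurableSpace ℝ)) X P :=
    hindepA'.comp (fun l x => K l ^ (1/α) * x) fun l => measurable_id.const_mul _
  have hmgf := hindepX.mgf_sum hXmeas Finset.univ (t := -s₀)
  have hsumX : ∀ ω, (∑ l, X l) ω = U ω := by
    intro ω
    rw [Finset.sum_apply]
    exact Finset.sum_congr rfl fun l _ => mul_comm _ _
  have hint1 : ∫ ω, Real.exp (-(s₀ * U ω)) ∂P = mgf (∑ l, X l) P (-s₀) := by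
    have hfun : (∑ l, X l) = U := funext hsumX
    show _ = ∫ ω, Real.exp ((-s₀) * (∑ l, X l) ω) ∂P
    rw [hfun]
    simp only [neg_mul]
  have hfactor : ∀ l, mgf (X l) P (-s₀) = Real.exp (-((s₀ * K l ^ (1/α)) ^ α)) := by
    intro l
    have h1 : mgf (X l) P (-s₀) = ∫ ω, Real.exp (-(s₀ * K l ^ (1/α)) * A l ω) ∂P := by
      show ∫ ω, Real.exp ((-s₀) * X l ω) ∂P = _
      refine integral_congr_ae ?_
      filter_upwards [hAA' l] with ω h
      simp only [hXdef]
      rw [← h]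
      congr 1
      ring
    rw [h1, hA_laplace l _ (mul_nonneg hs₀.le (Real.rpow_nonneg (hK l) _))]
  have hsK : ∀ l : Fin L, (s₀ * K l ^ (1/α)) ^ α = z⁻¹ * K l := by
    intro l
    rw [Real.mul_rpow hs₀.le (Real.rpow_nonneg (hK l) _), ← Real.rpow_mul (hK l),
      one_div_mul_cancel hα0.ne', Real.rpow_one, hs₀def, ← Real.rpow_mul hz.le]
    have hm1 : -(1/α) * α = -1 := by field_simp
    rw [hm1, Real.rpow_neg_one]
  calc P {ω | ε ω * (∑ l, A l ω * K l ^ (1/α)) ^ α ≤ z}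
      = P {ω | ε ω ≤ c ω} := htargetset
    _ = ∫⁻ ω, ENNReal.ofReal (F (c ω)) ∂P := hmain
    _ = ∫⁻ ω, ENNReal.ofReal (Real.exp (-(s₀ * U ω))) ∂P := hlint
    _ = ENNReal.ofReal (∫ ω, Real.exp (-(s₀ * U ω)) ∂P) := hof
    _ = ENNReal.ofReal (∏ l, mgf (X l) P (-s₀)) := by rw [hint1, hmgf]
    _ = ENNReal.ofReal (Real.exp (-(1/z))) := by
        congr 1
        rw [Finset.prod_congr rfl fun l _ => by rw [hfactor l, hsK l]]
        rw [← Real.exp_sum]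
        congr 1
        rw [Finset.sum_neg_distrib, ← Finset.mul_sum, hKsum, mul_one, one_div]
end

section
/- Let A_1,…,A_L be i.i.d. H(α,α,θ) with Laplace transform E[exp(-sA)] = exp(-((θ+s)^α - θ^α)), and let Z(s) = ε(s)·(Σ_{l=1}^L A_l K_l(s)^{1/α})^α with ε as in the Reich–Shaby model. Then Pr(Z(s_1) ≤ z_1,…,Z(s_D) ≤ z_D) = exp(Lθ^α - Σ_{l=1}^L (θ + Σ_{j=1}^D (z_j/K_l(s_j))^{-1/α})^α) for z_1,…,z_D > 0. -/
open MeasureTheory ProbabilityTheory Real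
open Filter Topology

lemma tsum_pi_fin_prod : ∀ {L : ℕ} (f : Fin L → ℕ → ENNReal),
    ∑' k : Fin L → ℕ, ∏ l, f l (k l) = ∏ l, ∑' m, f l m := by
  intro L
  induction L with
  | zero =>
    intro f
    rw [tsum_eq_single (fun i => i.elim0)]
    · simp
    · intro b hb; exact absurd (funext fun i => i.elim0) hb
  | succ n ih =>
    intro f
    have he := ((Fin.consEquiv (fun _ : Fin (n+1) => ℕ)).tsum_eq
      (fun k : Fin (n+1) → ℕ => ∏ l, f l (k l))).symm
    rw [he]
    have : ∀ p : ℕ × (Fin n → ℕ),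
        (∏ l, f l ((Fin.consEquiv (fun _ : Fin (n+1) => ℕ)) p l))
        = f 0 p.1 * ∏ l : Fin n, f l.succ (p.2 l) := by
      intro p
      rw [Fin.prod_univ_succ]
      simp [Fin.consEquiv, Fin.cons_zero, Fin.cons_succ]
    simp_rw [this]
    rw [ENNReal.tsum_prod']
    simp_rw [ENNReal.tsum_mul_left, ENNReal.tsum_mul_right]
    rw [Fin.prod_univ_succ]
    congr 1
    exact ih (fun l => f l.succ)

lemma measure_iUnion_of_carriers {Ω ι : Type*} [MeasurableSpace Ω] [Countable ι] [DecidableEq ι]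
    (μ : MeasureTheory.Measure Ω) (Dk S : ι → Set Ω) (hDS : ∀ k, Dk k ⊆ S k)
    (hS : Pairwise (Function.onFun Disjoint S))
    (hSm : ∀ k, NullMeasurableSet (S k) μ) :
    μ (⋃ k, Dk k) = ∑' k, μ (Dk k) := by
  refine le_antisymm (measure_iUnion_le Dk) ?_
  rw [ENNReal.tsum_eq_iSup_sum]
  refine iSup_le fun F => ?_
  have hfin : ∀ (F : Finset ι), μ (⋃ k ∈ F, Dk k) = ∑ k ∈ F, μ (Dk k) := by
    intro F
    induction F using Finset.induction_on with
    | empty => simp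
    | @insert a F ha ihF =>
      rw [Finset.sum_insert ha, ← ihF]
      have hU : (⋃ k ∈ insert a F, Dk k) = Dk a ∪ ⋃ k ∈ F, Dk k := by
        simp [Set.biUnion_insert]
      rw [hU]
      have h1 := measure_inter_add_diff₀ (μ := μ) (Dk a ∪ ⋃ k ∈ F, Dk k) (hSm a)
      have hDa : (Dk a ∪ ⋃ k ∈ F, Dk k) ∩ S a = Dk a := by
        apply Set.Subset.antisymm
        · rintro x ⟨hx | hx, hxa⟩
          · exact hx
          · exfalso
            obtain ⟨k, hkF, hxk⟩ := Set.mem_iUnion₂.mp hx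
            have hka : k ≠ a := by rintro rfl; exact ha hkF
            exact (hS hka).le_bot ⟨hDS k hxk, hxa⟩
        · intro x hx; exact ⟨Set.mem_union_left _ hx, hDS a hx⟩
      have hDb : (Dk a ∪ ⋃ k ∈ F, Dk k) \ S a = (⋃ k ∈ F, Dk k) \ S a := by
        rw [Set.union_diff_distrib]
        have : Dk a \ S a = ∅ := Set.diff_eq_empty.mpr (hDS a)
        simp [this]
      have hDb' : (⋃ k ∈ F, Dk k) \ S a = ⋃ k ∈ F, Dk k := by
        ext x
        simp only [Set.mem_diff, and_iff_left_iff_imp]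
        intro hx hxa
        obtain ⟨k, hkF, hxk⟩ := Set.mem_iUnion₂.mp hx
        have hka : k ≠ a := by rintro rfl; exact ha hkF
        exact ((hS hka).le_bot ⟨hDS k hxk, hxa⟩).elim
      rw [hDa, hDb, hDb'] at h1
      exact h1.symm
  rw [← hfin F]
  exact measure_mono (Set.iUnion₂_subset fun k _ => Set.subset_iUnion Dk k)

/-- Finite-dimensional distributions of the max-id extension.
With A_1,…,A_L i.i.d. H(α,α,θ) (Laplace transform exp(-((θ+s)^α - θ^α))), an
independent white-noise process ε with (1/α)-Fréchet marginals, and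
Z_j = ε_j · (Σ_l A_l K_l(s_j)^{1/α})^α, we have
Pr(Z_1 ≤ z_1,…,Z_D ≤ z_D) = exp(Lθ^α - Σ_l (θ + Σ_j (z_j/K_l(s_j))^{-1/α})^α). -/
theorem maxid_fdd
    {Ω : Type*} [MeasurableSpace Ω] (P : Measure Ω) [IsProbabilityMeasure P]
    (L D : ℕ) (hL : 0 < L) (hD : 0 < D)
    (α θ : ℝ) (hα : α ∈ Set.Ioo (0:ℝ) 1) (hθ : 0 ≤ θ)
    (A : Fin L → Ω → ℝ) (ε : Fin D → Ω → ℝ)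
    (K : Fin L → Fin D → ℝ) (hK : ∀ l j, 0 ≤ K l j)
    (hindep : iIndepFun
      (Sum.elim A ε) P)
    (hApos : ∀ l, ∀ᵐ ω ∂P, 0 < A l ω)
    (hA_laplace : ∀ l, ∀ s : ℝ, 0 ≤ s →
      ∫ ω, Real.exp (-s * A l ω) ∂P = Real.exp (-((θ + s) ^ α - θ ^ α)))
    (hε : ∀ j, ∀ z : ℝ, 0 < z →
      P {ω | ε j ω ≤ z} = ENNReal.ofReal (Real.exp (-(z ^ (-(1/α)))))) :
    ∀ z : Fin D → ℝ, (∀ j, 0 < z j) →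
      P {ω | ∀ j, ε j ω * (∑ l, A l ω * K l j ^ (1/α)) ^ α ≤ z j}
        = ENNReal.ofReal
            (Real.exp ((L : ℝ) * θ ^ α
              - ∑ l, (θ + ∑ j, (z j / K l j) ^ (-(1/α))) ^ α)) := by
  intro z hz
  obtain ⟨hα0, hα1⟩ := hα
  have hαne : α ≠ 0 := ne_of_gt hα0
  have hcne : -(1/α) ≠ 0 := by
    have : 0 < 1/α := by positivity
    exact neg_ne_zero.mpr (ne_of_gt this)
  set t : Fin L → Fin D → ℝ := fun l j => (z j / K l j) ^ (-(1/α)) with ht_def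
  set sl : Fin L → ℝ := fun l => ∑ j, t l j with hsl_def
  have ht_nonneg : ∀ l j, 0 ≤ t l j := fun l j =>
    Real.rpow_nonneg (div_nonneg (hz j).le (hK l j)) _
  have hsl_nonneg : ∀ l, 0 ≤ sl l := fun l =>
    Finset.sum_nonneg fun j _ => ht_nonneg l j
  -- basic rpow identity
  have hyId : ∀ (j : Fin D) (y : ℝ), 0 ≤ y →
      (z j / y) ^ (-(1/α)) = z j ^ (-(1/α)) * y ^ (1/α) := by
    intro j y hy
    rcases hy.eq_or_lt with h0 | hypos
    · rw [← h0, div_zero, Real.zero_rpow hcne, Real.zero_rpow (one_div_ne_zero hαne), mul_zero]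
    · rw [div_eq_mul_inv, Real.mul_rpow (hz j).le (inv_nonneg.2 hypos.le),
        Real.inv_rpow hypos.le, Real.rpow_neg hypos.le, inv_inv]
  -- measure of the epsilon events
  have hev : ∀ (j : Fin D) (a : Fin L → ℝ), (∀ l, 0 ≤ a l) →
      P (ε j ⁻¹' {x : ℝ | x * (∑ l, a l * K l j ^ (1/α)) ^ α ≤ z j})
        = ENNReal.ofReal (Real.exp (-(∑ l, a l * t l j))) := by
    intro j a ha
    have htlj : ∀ l, t l j = z j ^ (-(1/α)) * K l j ^ (1/α) := fun l => hyId j (K l j) (hK l j)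
    have hX0 : 0 ≤ ∑ l, a l * K l j ^ (1/α) :=
      Finset.sum_nonneg fun l _ => mul_nonneg (ha l) (Real.rpow_nonneg (hK l j) _)
    rcases hX0.eq_or_lt with hXz | hXpos
    · have hC0 : (∑ l, a l * K l j ^ (1/α)) ^ α = 0 := by
        rw [← hXz, Real.zero_rpow hαne]
      have hset : {x : ℝ | x * (∑ l, a l * K l j ^ (1/α)) ^ α ≤ z j} = Set.univ := by
        ext x
        simp only [Set.mem_setOf_eq, hC0, mul_zero, Set.mem_univ, iff_true]
        exact (hz j).le
      have hterm : ∀ l ∈ Finset.univ, a l * t l j = 0 := by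
        intro l _
        have h0 : a l * K l j ^ (1/α) = 0 :=
          (Finset.sum_eq_zero_iff_of_nonneg
            (fun l _ => mul_nonneg (ha l) (Real.rpow_nonneg (hK l j) _))).mp
            hXz.symm l (Finset.mem_univ l)
        rw [htlj l, mul_comm (z j ^ (-(1/α))), ← mul_assoc, h0, zero_mul]
      rw [hset, Finset.sum_eq_zero hterm]
      simp
    · have hCpos : 0 < (∑ l, a l * K l j ^ (1/α)) ^ α := Real.rpow_pos_of_pos hXpos α
      have hset : {x : ℝ | x * (∑ l, a l * K l j ^ (1/α)) ^ α ≤ z j}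
          = Set.Iic (z j / (∑ l, a l * K l j ^ (1/α)) ^ α) := by
        ext x
        simp only [Set.mem_setOf_eq, Set.mem_Iic]
        exact (le_div_iff₀ hCpos).symm
      have hpre' : ε j ⁻¹' Set.Iic (z j / (∑ l, a l * K l j ^ (1/α)) ^ α)
          = {ω | ε j ω ≤ z j / (∑ l, a l * K l j ^ (1/α)) ^ α} := rfl
      rw [hset, hpre', hε j _ (div_pos (hz j) hCpos)]
      have hexp : (z j / (∑ l, a l * K l j ^ (1/α)) ^ α) ^ (-(1/α)) = ∑ l, a l * t l j := by
        rw [hyId j _ hCpos.le]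
        have hCroot : ((∑ l, a l * K l j ^ (1/α)) ^ α) ^ (1/α)
            = ∑ l, a l * K l j ^ (1/α) := by
          rw [← Real.rpow_mul hXpos.le, mul_one_div_cancel hαne, Real.rpow_one]
        rw [hCroot, Finset.mul_sum]
        refine Finset.sum_congr rfl fun l _ => ?_
        rw [htlj l]; ring
      rw [hexp]
  -- A is a.e. measurable
  have hAmeas : ∀ l, AEMeasurable (A l) P := by
    intro l
    have h1 := hA_laplace l 1 zero_le_one
    have hInt : Integrable (fun ω => Real.exp (-1 * A l ω)) P := by
      by_contra hni
      rw [integral_undef hni] at h1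
      exact (Real.exp_pos _).ne' h1.symm
    have hexp : AEMeasurable (fun ω => Real.exp (-1 * A l ω)) P :=
      hInt.aestronglyMeasurable.aemeasurable
    have hlog : AEMeasurable (fun ω => -Real.log (Real.exp (-1 * A l ω))) P :=
      (Real.measurable_log.comp_aemeasurable hexp).neg
    exact hlog.congr (Filter.Eventually.of_forall fun ω => by simp only []; rw [Real.log_exp]; ring)
  set A' : Fin L → Ω → ℝ := fun l => (hAmeas l).mk (A l) with hA'def
  have hA'meas : ∀ l, Measurable (A' l) := fun l => (hAmeas l).measurable_mk
  have hA'eq : ∀ l, A l =ᵐ[P] A' l := fun l => (hAmeas l).ae_eq_mk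
  have hpre : ∀ l (s : Set ℝ), P (A l ⁻¹' s) = P (A' l ⁻¹' s) := by
    intro l s
    apply measure_congr
    filter_upwards [hA'eq l] with ω h
    show (A l ω ∈ s) = (A' l ω ∈ s)
    rw [h]
  have hprenull : ∀ l (s : Set ℝ), MeasurableSet s → NullMeasurableSet (A l ⁻¹' s) P := by
    intro l s hs
    refine ((hA'meas l) hs).nullMeasurableSet.congr ?_
    filter_upwards [hA'eq l] with ω h
    show (A' l ω ∈ s) = (A l ω ∈ s)
    rw [h]
  -- epsilon positive a.s.
  have hεpos : ∀ᵐ ω ∂P, ∀ j, 0 < ε j ω := by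
    rw [ae_all_iff]
    intro j
    have hset : ∀ m : ℕ, P {ω | ε j ω ≤ 0}
        ≤ ENNReal.ofReal (Real.exp (-(((m:ℝ)+1) ^ (1/α)))) := by
      intro m
      have hpos : (0:ℝ) < ((m:ℝ)+1)⁻¹ := by positivity
      have heq := hε j _ hpos
      have hmono : P {ω | ε j ω ≤ 0} ≤ P {ω | ε j ω ≤ ((m:ℝ)+1)⁻¹} :=
        measure_mono fun ω (h : ε j ω ≤ 0) => le_trans h hpos.le
      rw [heq] at hmono
      have hrw : (((m:ℝ)+1)⁻¹) ^ (-(1/α)) = ((m:ℝ)+1) ^ (1/α) := by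
        rw [Real.inv_rpow (by positivity), Real.rpow_neg (by positivity), inv_inv]
      rwa [hrw] at hmono
    have htend : Tendsto (fun m : ℕ => ENNReal.ofReal (Real.exp (-(((m:ℝ)+1) ^ (1/α)))))
        atTop (𝓝 0) := by
      rw [← ENNReal.ofReal_zero]
      apply ENNReal.tendsto_ofReal
      have h1 : Tendsto (fun m : ℕ => ((m:ℝ)+1)) atTop atTop :=
        tendsto_atTop_add_const_right atTop 1 tendsto_natCast_atTop_atTop
      have h2 := (tendsto_rpow_atTop (by positivity : (0:ℝ) < 1/α)).comp h1
      exact Real.tendsto_exp_neg_atTop_nhds_zero.comp h2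
    have h0 : P {ω | ε j ω ≤ 0} ≤ 0 := ge_of_tendsto' htend hset
    rw [ae_iff]
    have hseteq : {ω | ¬ 0 < ε j ω} = {ω | ε j ω ≤ 0} := by ext ω; simp [not_lt]
    rw [hseteq]
    exact le_antisymm h0 zero_le
  set G : Set Ω := {ω | (∀ l, 0 < A l ω) ∧ (∀ j, 0 < ε j ω)} with hG_def
  have hGae : ∀ᵐ ω ∂P, ω ∈ G := ((ae_all_iff).2 hApos).and hεpos
  have hG : P Gᶜ = 0 := by
    rw [ae_iff] at hGae
    simpa [Set.compl_def] using hGae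
  -- dyadic machinery
  set Ico2 : ℕ → ℕ → Set ℝ := fun n m => Set.Ico ((m : ℝ)/2^n) (((m : ℝ)+1)/2^n) with hIco2_def
  set gr : ℝ → ℕ → (Fin L → ℕ) → Fin L → ℝ := fun δ n k l => ((k l : ℝ) + δ)/2^n with hgr_def
  set Dset : ℝ → ℕ → (Fin L → ℕ) → Set Ω := fun δ n k =>
    (⋂ l, A l ⁻¹' Ico2 n (k l)) ∩
      ⋂ j, ε j ⁻¹' {x : ℝ | x * (∑ l, gr δ n k l * K l j ^ (1/α)) ^ α ≤ z j} with hDset_def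
  have hDmeas : ∀ (δ : ℝ), 0 ≤ δ → ∀ (n : ℕ) (k : Fin L → ℕ), P (Dset δ n k)
      = ∏ l, (P (A l ⁻¹' Ico2 n (k l))
          * ENNReal.ofReal (Real.exp (-(gr δ n k l * sl l)))) := by
    intro δ hδ n k
    have hgr_nonneg : ∀ l, 0 ≤ gr δ n k l := by
      intro l; simp only [hgr_def]; positivity
    set sets : (i : Fin L ⊕ Fin D) → Set ℝ := Sum.elim
      (fun l => Ico2 n (k l))
      (fun j => {x : ℝ | x * (∑ l, gr δ n k l * K l j ^ (1/α)) ^ α ≤ z j}) with hsets_def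
    have hsetsm : ∀ i ∈ Finset.univ, MeasurableSet (sets i) := by
      intro i _
      rcases i with l | j
      · exact measurableSet_Ico
      · have heqs : {x : ℝ | x * (∑ l, gr δ n k l * K l j ^ (1/α)) ^ α ≤ z j}
            = (fun x : ℝ => x * (∑ l, gr δ n k l * K l j ^ (1/α)) ^ α) ⁻¹' Set.Iic (z j) := rfl
        show MeasurableSet {x : ℝ | x * (∑ l, gr δ n k l * K l j ^ (1/α)) ^ α ≤ z j}
        rw [heqs]
        exact (measurable_mul_const _) measurableSet_Iic
    have hprod := hindep.measure_inter_preimage_eq_mul (S := Finset.univ) (sets := sets) hsetsm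
    have hLHS : (⋂ i ∈ Finset.univ, Sum.elim A ε i ⁻¹' sets i) = Dset δ n k := by
      ext ω
      simp only [Set.mem_iInter, Finset.mem_univ, forall_const, hDset_def,
        Set.mem_inter_iff, Set.mem_preimage, Sum.forall, Sum.elim_inl, Sum.elim_inr,
        hsets_def]
    have hRHS : (∏ i : Fin L ⊕ Fin D, P (Sum.elim A ε i ⁻¹' sets i))
        = (∏ l, P (A l ⁻¹' Ico2 n (k l)))
          * ∏ j, P (ε j ⁻¹' {x : ℝ | x * (∑ l, gr δ n k l * K l j ^ (1/α)) ^ α ≤ z j}) := by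
      rw [Fintype.prod_sum_type]
      rfl
    have hevj : ∀ j, P (ε j ⁻¹' {x : ℝ | x * (∑ l, gr δ n k l * K l j ^ (1/α)) ^ α ≤ z j})
        = ENNReal.ofReal (Real.exp (-(∑ l, gr δ n k l * t l j))) :=
      fun j => hev j _ hgr_nonneg
    have hswap : (∏ j, ENNReal.ofReal (Real.exp (-(∑ l, gr δ n k l * t l j))))
        = ∏ l, ENNReal.ofReal (Real.exp (-(gr δ n k l * sl l))) := by
      rw [← ENNReal.ofReal_prod_of_nonneg (fun j _ => (Real.exp_pos _).le),
          ← ENNReal.ofReal_prod_of_nonneg (fun l _ => (Real.exp_pos _).le)]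
      congr 1
      rw [← Real.exp_sum, ← Real.exp_sum]
      congr 1
      rw [Finset.sum_neg_distrib, Finset.sum_neg_distrib, neg_inj, Finset.sum_comm]
      refine Finset.sum_congr rfl fun l _ => ?_
      rw [← Finset.mul_sum]
    calc P (Dset δ n k) = ∏ i : Fin L ⊕ Fin D, P (Sum.elim A ε i ⁻¹' sets i) := by
          rw [← hLHS]
          simpa using hprod
      _ = (∏ l, P (A l ⁻¹' Ico2 n (k l)))
            * ∏ l, ENNReal.ofReal (Real.exp (-(gr δ n k l * sl l))) := by
          rw [hRHS]
          congr 1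
          rw [← hswap]
          exact Finset.prod_congr rfl fun j _ => hevj j
      _ = ∏ l, (P (A l ⁻¹' Ico2 n (k l)) * ENNReal.ofReal (Real.exp (-(gr δ n k l * sl l)))) :=
          Finset.prod_mul_distrib.symm
  have hU : ∀ (δ : ℝ), 0 ≤ δ → ∀ n : ℕ, P (⋃ k : Fin L → ℕ, Dset δ n k)
      = ∏ l, ∑' m : ℕ, (P (A l ⁻¹' Ico2 n m)
          * ENNReal.ofReal (Real.exp (-(((m : ℝ) + δ)/2^n * sl l)))) := by
    intro δ hδ n
    have hdisj : Pairwise (Function.onFun Disjoint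
        (fun k : Fin L → ℕ => ⋂ l, A l ⁻¹' Ico2 n (k l))) := by
      intro k k' hkk
      obtain ⟨l0, hl0⟩ : ∃ l0, k l0 ≠ k' l0 := by
        by_contra hc; push_neg at hc; exact hkk (funext hc)
      have key : ∀ m m' : ℕ, m < m' → Disjoint (Ico2 n m) (Ico2 n m') := by
        intro m m' hmm
        rw [hIco2_def]
        rw [Set.Ico_disjoint_Ico]
        refine min_le_of_left_le (le_trans ?_ (le_max_right _ _))
        rw [div_le_div_iff_of_pos_right (by positivity : (0:ℝ) < 2^n)]
        exact_mod_cast Nat.succ_le_of_lt hmm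
      have hIdisj : Disjoint (Ico2 n (k l0)) (Ico2 n (k' l0)) := by
        rcases lt_or_gt_of_ne hl0 with h | h
        · exact key _ _ h
        · exact (key _ _ h).symm
      refine Set.disjoint_left.mpr fun ω hωk hωk' => ?_
      have h1 := Set.mem_iInter.mp hωk l0
      have h2 := Set.mem_iInter.mp hωk' l0
      exact Set.disjoint_left.mp hIdisj h1 h2
    have hnm : ∀ k : Fin L → ℕ, NullMeasurableSet (⋂ l, A l ⁻¹' Ico2 n (k l)) P :=
      fun k => NullMeasurableSet.iInter fun l => hprenull l _ measurableSet_Ico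
    rw [measure_iUnion_of_carriers P (Dset δ n) _
      (fun k => Set.inter_subset_left) hdisj hnm]
    calc (∑' k : Fin L → ℕ, P (Dset δ n k))
        = ∑' k : Fin L → ℕ, ∏ l, (P (A l ⁻¹' Ico2 n (k l))
            * ENNReal.ofReal (Real.exp (-(((k l : ℝ) + δ)/2^n * sl l)))) := by
          refine tsum_congr fun k => ?_
          rw [hDmeas δ hδ n k]
      _ = ∏ l, ∑' m : ℕ, (P (A l ⁻¹' Ico2 n m)
            * ENNReal.ofReal (Real.exp (-(((m : ℝ) + δ)/2^n * sl l)))) :=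
          tsum_pi_fin_prod (fun l m => P (A l ⁻¹' Ico2 n m)
            * ENNReal.ofReal (Real.exp (-(((m : ℝ) + δ)/2^n * sl l))))
  set r : ℝ → ℕ → Fin L → ℝ := fun δ n l =>
    ∫ ω, Real.exp (-(((⌊(2:ℝ)^n * A' l ω⌋₊ : ℝ) + δ)/2^n * sl l)) ∂P with hr_def
  have hrnonneg : ∀ δ n l, 0 ≤ r δ n l := by
    intro δ n l
    exact integral_nonneg fun ω => (Real.exp_pos _).le
  have hT : ∀ (δ : ℝ), 0 ≤ δ → ∀ (n : ℕ) (l : Fin L),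
      ∑' m : ℕ, (P (A l ⁻¹' Ico2 n m)
          * ENNReal.ofReal (Real.exp (-(((m : ℝ) + δ)/2^n * sl l))))
        = ENNReal.ofReal (r δ n l) := by
    intro δ hδ n l
    have h2n : (0:ℝ) < 2 ^ n := by positivity
    set φ : ℝ → ℝ := fun x =>
      Real.exp (-(((⌊(2:ℝ)^n * x⌋₊ : ℝ) + δ)/2^n * sl l)) with hφ_def
    have hφmono : Antitone φ := by
      intro x y hxy
      apply Real.exp_le_exp.mpr
      apply neg_le_neg
      apply mul_le_mul_of_nonneg_right _ (hsl_nonneg l)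
      rw [div_le_div_iff_of_pos_right h2n]
      have hfl : ⌊(2:ℝ)^n * x⌋₊ ≤ ⌊(2:ℝ)^n * y⌋₊ :=
        Nat.floor_mono (mul_le_mul_of_nonneg_left hxy h2n.le)
      have : ((⌊(2:ℝ)^n * x⌋₊ : ℝ)) ≤ ((⌊(2:ℝ)^n * y⌋₊ : ℝ)) := by exact_mod_cast hfl
      linarith
    have hφmeas : Measurable φ := hφmono.measurable
    have hφcomp : Measurable (fun ω => φ (A' l ω)) := hφmeas.comp (hA'meas l)
    have hφnonneg : ∀ x, 0 ≤ φ x := fun x => (Real.exp_pos _).le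
    have hφle1 : ∀ x, φ x ≤ 1 := by
      intro x
      apply Real.exp_le_one_iff.mpr
      have h1 : (0:ℝ) ≤ ((⌊(2:ℝ)^n * x⌋₊ : ℝ) + δ)/2^n * sl l := by
        apply mul_nonneg _ (hsl_nonneg l)
        positivity
      linarith
    have hInt : Integrable (fun ω => φ (A' l ω)) P := by
      refine Integrable.mono' (integrable_const (1:ℝ)) hφcomp.aestronglyMeasurable ?_
      refine Filter.Eventually.of_forall fun ω => ?_
      rw [Real.norm_eq_abs, abs_of_nonneg (hφnonneg _)]
      exact hφle1 _
    have hstep : ∀ m : ℕ, P (A l ⁻¹' Ico2 n m)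
          * ENNReal.ofReal (Real.exp (-(((m : ℝ) + δ)/2^n * sl l)))
        = ∫⁻ ω, Set.indicator (A' l ⁻¹' Ico2 n m)
            (fun _ => ENNReal.ofReal (Real.exp (-(((m : ℝ) + δ)/2^n * sl l)))) ω ∂P := by
      intro m
      rw [lintegral_indicator_const ((hA'meas l) measurableSet_Ico), hpre l, mul_comm]
    have hmem_iff : ∀ (x : ℝ) (m : ℕ), 0 ≤ x → (x ∈ Ico2 n m ↔ ⌊(2:ℝ)^n * x⌋₊ = m) := by
      intro x m hx
      rw [hIco2_def]
      simp only [Set.mem_Ico]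
      rw [Nat.floor_eq_iff (by positivity : (0:ℝ) ≤ (2:ℝ)^n * x)]
      constructor
      · rintro ⟨h1, h2⟩
        constructor
        · rw [div_le_iff₀ h2n] at h1; linarith [h1]
        · rw [lt_div_iff₀ h2n] at h2; linarith [h2]
      · rintro ⟨h1, h2⟩
        constructor
        · rw [div_le_iff₀ h2n]; linarith
        · rw [lt_div_iff₀ h2n]; linarith
    calc (∑' m : ℕ, P (A l ⁻¹' Ico2 n m)
            * ENNReal.ofReal (Real.exp (-(((m : ℝ) + δ)/2^n * sl l))))
        = ∑' m : ℕ, ∫⁻ ω, Set.indicator (A' l ⁻¹' Ico2 n m)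
            (fun _ => ENNReal.ofReal (Real.exp (-(((m : ℝ) + δ)/2^n * sl l)))) ω ∂P :=
          tsum_congr hstep
      _ = ∫⁻ ω, ∑' m : ℕ, Set.indicator (A' l ⁻¹' Ico2 n m)
            (fun _ => ENNReal.ofReal (Real.exp (-(((m : ℝ) + δ)/2^n * sl l)))) ω ∂P :=
          (lintegral_tsum fun m => (measurable_const.indicator
            ((hA'meas l) measurableSet_Ico)).aemeasurable).symm
      _ = ∫⁻ ω, ENNReal.ofReal (φ (A' l ω)) ∂P := by
          apply lintegral_congr_ae
          have hA'pos : ∀ᵐ ω ∂P, 0 < A' l ω := by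
            filter_upwards [hApos l, hA'eq l] with ω h1 h2
            rw [← h2]; exact h1
          filter_upwards [hA'pos] with ω hω
          have hx : (0:ℝ) ≤ A' l ω := hω.le
          rw [tsum_eq_single ⌊(2:ℝ)^n * A' l ω⌋₊ ?_]
          · have hmem : A' l ω ∈ Ico2 n ⌊(2:ℝ)^n * A' l ω⌋₊ :=
              (hmem_iff _ _ hx).mpr rfl
            have hmem' : ω ∈ A' l ⁻¹' Ico2 n ⌊(2:ℝ)^n * A' l ω⌋₊ := hmem
            rw [Set.indicator_of_mem hmem']
          · intro m hm
            apply Set.indicator_of_notMem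
            intro hmem
            exact hm ((hmem_iff _ _ hx).mp hmem).symm
      _ = ENNReal.ofReal (∫ ω, φ (A' l ω) ∂P) :=
          (MeasureTheory.ofReal_integral_eq_lintegral_ofReal hInt
            (Filter.Eventually.of_forall fun ω => hφnonneg _)).symm
      _ = ENNReal.ofReal (r δ n l) := rfl
  have hrlim : ∀ (δ : ℝ), 0 ≤ δ → δ ≤ 1 → ∀ l, Tendsto (fun n => r δ n l) atTop
      (𝓝 (Real.exp (-((θ + sl l) ^ α - θ ^ α)))) := by
    intro δ hδ0 hδ1 l
    have hlimfun : ∫ ω, Real.exp (-(A' l ω * sl l)) ∂P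
        = Real.exp (-((θ + sl l) ^ α - θ ^ α)) := by
      rw [← hA_laplace l (sl l) (hsl_nonneg l)]
      apply integral_congr_ae
      filter_upwards [hA'eq l] with ω h
      rw [← h]; ring_nf
    rw [← hlimfun]
    apply MeasureTheory.tendsto_integral_of_dominated_convergence (fun _ => (1:ℝ))
    · intro n
      have h2n : (0:ℝ) < 2 ^ n := by positivity
      have hφmono : Antitone (fun x : ℝ =>
          Real.exp (-(((⌊(2:ℝ)^n * x⌋₊ : ℝ) + δ)/2^n * sl l))) := by
        intro x y hxy
        apply Real.exp_le_exp.mpr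
        apply neg_le_neg
        apply mul_le_mul_of_nonneg_right _ (hsl_nonneg l)
        rw [div_le_div_iff_of_pos_right h2n]
        have hfl : ⌊(2:ℝ)^n * x⌋₊ ≤ ⌊(2:ℝ)^n * y⌋₊ :=
          Nat.floor_mono (mul_le_mul_of_nonneg_left hxy h2n.le)
        have : ((⌊(2:ℝ)^n * x⌋₊ : ℝ)) ≤ ((⌊(2:ℝ)^n * y⌋₊ : ℝ)) := by exact_mod_cast hfl
        linarith
      exact (hφmono.measurable.comp (hA'meas l)).aestronglyMeasurable
    · exact integrable_const 1
    · intro n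
      refine Filter.Eventually.of_forall fun ω => ?_
      have h1 : (0:ℝ) ≤ ((⌊(2:ℝ)^n * A' l ω⌋₊ : ℝ) + δ)/2^n * sl l := by
        apply mul_nonneg _ (hsl_nonneg l)
        positivity
      rw [Real.norm_eq_abs, abs_of_nonneg (Real.exp_pos _).le]
      calc Real.exp (-(((⌊(2:ℝ)^n * A' l ω⌋₊ : ℝ) + δ)/2^n * sl l)) ≤ Real.exp 0 :=
            Real.exp_le_exp.mpr (by linarith)
        _ = 1 := Real.exp_zero
    · have hA'pos : ∀ᵐ ω ∂P, 0 < A' l ω := by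
        filter_upwards [hApos l, hA'eq l] with ω h1 h2
        rw [← h2]; exact h1
      filter_upwards [hA'pos] with ω hω
      set x := A' l ω with hx_def
      have hx : (0:ℝ) ≤ x := hω.le
      have hu : Tendsto (fun n : ℕ => ((⌊(2:ℝ)^n * x⌋₊ : ℝ) + δ)/2^n) atTop (𝓝 x) := by
        have hhalf : Tendsto (fun n : ℕ => ((1:ℝ)/2)^n) atTop (𝓝 0) := by
          apply tendsto_pow_atTop_nhds_zero_of_lt_one <;> norm_num
        have hlo : Tendsto (fun n : ℕ => x + (δ-1) * ((1:ℝ)/2)^n) atTop (𝓝 x) := by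
          have := (hhalf.const_mul (δ-1)).const_add x
          simpa using this
        have hhi : Tendsto (fun n : ℕ => x + δ * ((1:ℝ)/2)^n) atTop (𝓝 x) := by
          have := (hhalf.const_mul δ).const_add x
          simpa using this
        apply tendsto_of_tendsto_of_tendsto_of_le_of_le hlo hhi
        · intro n
          have h2n : (0:ℝ) < 2 ^ n := by positivity
          have hfl : (2:ℝ)^n * x - 1 < (⌊(2:ℝ)^n * x⌋₊ : ℝ) :=
            Nat.sub_one_lt_floor _
          have hone : ((1:ℝ)/2)^n * 2^n = 1 := by
            rw [one_div, inv_pow, inv_mul_cancel₀ (ne_of_gt h2n)]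
          rw [le_div_iff₀ h2n]
          nlinarith
        · intro n
          have h2n : (0:ℝ) < 2 ^ n := by positivity
          have hfl : (⌊(2:ℝ)^n * x⌋₊ : ℝ) ≤ (2:ℝ)^n * x :=
            Nat.floor_le (by positivity)
          have hone : ((1:ℝ)/2)^n * 2^n = 1 := by
            rw [one_div, inv_pow, inv_mul_cancel₀ (ne_of_gt h2n)]
          rw [div_le_iff₀ h2n]
          nlinarith
      have := ((hu.mul_const (sl l)).neg)
      exact (Real.continuous_exp.tendsto _).comp this
  have hUlim : ∀ (δ : ℝ), 0 ≤ δ → δ ≤ 1 →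
      Tendsto (fun n => P (⋃ k : Fin L → ℕ, Dset δ n k)) atTop
        (𝓝 (ENNReal.ofReal (∏ l, Real.exp (-((θ + sl l) ^ α - θ ^ α))))) := by
    intro δ hδ0 hδ1
    have h1 : ∀ n, P (⋃ k : Fin L → ℕ, Dset δ n k) = ENNReal.ofReal (∏ l, r δ n l) := by
      intro n
      rw [hU δ hδ0 n, ENNReal.ofReal_prod_of_nonneg fun l _ => hrnonneg δ n l]
      exact Finset.prod_congr rfl fun l _ => hT δ hδ0 n l
    simp_rw [h1]
    refine (ENNReal.continuous_ofReal.tendsto _).comp ?_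
    exact tendsto_finset_prod _ fun l _ => hrlim δ hδ0 hδ1 l
  -- sandwich
  have hlow : ∀ n : ℕ, P (⋃ k : Fin L → ℕ, Dset 1 n k)
      ≤ P {ω | ∀ j, ε j ω * (∑ l, A l ω * K l j ^ (1/α)) ^ α ≤ z j} := by
    intro n
    have hsub : (⋃ k : Fin L → ℕ, Dset 1 n k) ∩ G
        ⊆ {ω | ∀ j, ε j ω * (∑ l, A l ω * K l j ^ (1/α)) ^ α ≤ z j} := by
      rintro ω ⟨hωU, hωG⟩
      obtain ⟨k, hωk⟩ := Set.mem_iUnion.mp hωU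
      have hA1 : ω ∈ ⋂ l, A l ⁻¹' Ico2 n (k l) := hωk.1
      have hE1 : ω ∈ ⋂ j, ε j ⁻¹' {x : ℝ | x * (∑ l, gr 1 n k l * K l j ^ (1/α)) ^ α ≤ z j} :=
        hωk.2
      intro j
      have hεj : ε j ω * (∑ l, gr 1 n k l * K l j ^ (1/α)) ^ α ≤ z j :=
        Set.mem_iInter.mp hE1 j
      have hAl : ∀ l, A l ω ≤ gr 1 n k l := by
        intro l
        have hmem := Set.mem_iInter.mp hA1 l
        have h2 : A l ω < ((k l : ℝ) + 1)/2^n := hmem.2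
        exact le_of_lt h2
      have hsum : (∑ l, A l ω * K l j ^ (1/α)) ≤ ∑ l, gr 1 n k l * K l j ^ (1/α) :=
        Finset.sum_le_sum fun l _ =>
          mul_le_mul_of_nonneg_right (hAl l) (Real.rpow_nonneg (hK l j) _)
      have hpow : (∑ l, A l ω * K l j ^ (1/α)) ^ α
          ≤ (∑ l, gr 1 n k l * K l j ^ (1/α)) ^ α :=
        Real.rpow_le_rpow (Finset.sum_nonneg fun l _ =>
          mul_nonneg (hωG.1 l).le (Real.rpow_nonneg (hK l j) _)) hsum hα0.le
      calc ε j ω * (∑ l, A l ω * K l j ^ (1/α)) ^ α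
          ≤ ε j ω * (∑ l, gr 1 n k l * K l j ^ (1/α)) ^ α :=
            mul_le_mul_of_nonneg_left hpow (hωG.2 j).le
        _ ≤ z j := hεj
    calc P (⋃ k : Fin L → ℕ, Dset 1 n k)
        = P ((⋃ k : Fin L → ℕ, Dset 1 n k) ∩ G) := (measure_inter_conull hG).symm
      _ ≤ P {ω | ∀ j, ε j ω * (∑ l, A l ω * K l j ^ (1/α)) ^ α ≤ z j} :=
          measure_mono hsub
  have hhigh : ∀ n : ℕ, P {ω | ∀ j, ε j ω * (∑ l, A l ω * K l j ^ (1/α)) ^ α ≤ z j}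
      ≤ P (⋃ k : Fin L → ℕ, Dset 0 n k) := by
    intro n
    have h2n : (0:ℝ) < 2 ^ n := by positivity
    have hsub : {ω | ∀ j, ε j ω * (∑ l, A l ω * K l j ^ (1/α)) ^ α ≤ z j} ∩ G
        ⊆ ⋃ k : Fin L → ℕ, Dset 0 n k := by
      rintro ω ⟨hωE, hωG⟩
      refine Set.mem_iUnion.mpr ⟨fun l => ⌊(2:ℝ)^n * A l ω⌋₊, ?_, ?_⟩
      · apply Set.mem_iInter.mpr
        intro l
        have hx : (0:ℝ) ≤ (2:ℝ)^n * A l ω := mul_nonneg h2n.le (hωG.1 l).le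
        constructor
        · rw [div_le_iff₀ h2n]
          have := Nat.floor_le hx
          linarith [this, (mul_comm ((2:ℝ)^n) (A l ω)) ▸ this]
        · rw [lt_div_iff₀ h2n]
          have := Nat.lt_floor_add_one ((2:ℝ)^n * A l ω)
          calc A l ω * 2^n = 2^n * A l ω := mul_comm _ _
            _ < (⌊(2:ℝ)^n * A l ω⌋₊ : ℝ) + 1 := this
      · apply Set.mem_iInter.mpr
        intro j
        show ε j ω * (∑ l, gr 0 n (fun l => ⌊(2:ℝ)^n * A l ω⌋₊) l * K l j ^ (1/α)) ^ α ≤ z j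
        have hgrle : ∀ l, gr 0 n (fun l => ⌊(2:ℝ)^n * A l ω⌋₊) l ≤ A l ω := by
          intro l
          show ((⌊(2:ℝ)^n * A l ω⌋₊ : ℝ) + 0)/2^n ≤ A l ω
          rw [add_zero, div_le_iff₀ h2n]
          have hx : (0:ℝ) ≤ (2:ℝ)^n * A l ω := mul_nonneg h2n.le (hωG.1 l).le
          have := Nat.floor_le hx
          linarith
        have hgrnn : ∀ l, 0 ≤ gr 0 n (fun l => ⌊(2:ℝ)^n * A l ω⌋₊) l := by
          intro l
          show (0:ℝ) ≤ ((⌊(2:ℝ)^n * A l ω⌋₊ : ℝ) + 0)/2^n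
          positivity
        have hsum : (∑ l, gr 0 n (fun l => ⌊(2:ℝ)^n * A l ω⌋₊) l * K l j ^ (1/α))
            ≤ ∑ l, A l ω * K l j ^ (1/α) :=
          Finset.sum_le_sum fun l _ =>
            mul_le_mul_of_nonneg_right (hgrle l) (Real.rpow_nonneg (hK l j) _)
        have hpow : (∑ l, gr 0 n (fun l => ⌊(2:ℝ)^n * A l ω⌋₊) l * K l j ^ (1/α)) ^ α
            ≤ (∑ l, A l ω * K l j ^ (1/α)) ^ α :=
          Real.rpow_le_rpow (Finset.sum_nonneg fun l _ =>
            mul_nonneg (hgrnn l) (Real.rpow_nonneg (hK l j) _)) hsum hα0.le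
        calc ε j ω * (∑ l, gr 0 n (fun l => ⌊(2:ℝ)^n * A l ω⌋₊) l * K l j ^ (1/α)) ^ α
            ≤ ε j ω * (∑ l, A l ω * K l j ^ (1/α)) ^ α :=
              mul_le_mul_of_nonneg_left hpow (hωG.2 j).le
          _ ≤ z j := hωE j
    calc P {ω | ∀ j, ε j ω * (∑ l, A l ω * K l j ^ (1/α)) ^ α ≤ z j}
        = P ({ω | ∀ j, ε j ω * (∑ l, A l ω * K l j ^ (1/α)) ^ α ≤ z j} ∩ G) :=
          (measure_inter_conull hG).symm
      _ ≤ P (⋃ k : Fin L → ℕ, Dset 0 n k) := measure_mono hsub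
  have key : P {ω | ∀ j, ε j ω * (∑ l, A l ω * K l j ^ (1/α)) ^ α ≤ z j}
      = ENNReal.ofReal (∏ l, Real.exp (-((θ + sl l) ^ α - θ ^ α))) := by
    refine le_antisymm ?_ ?_
    · exact ge_of_tendsto (hUlim 0 le_rfl zero_le_one) (Filter.Eventually.of_forall hhigh)
    · exact le_of_tendsto (hUlim 1 zero_le_one le_rfl) (Filter.Eventually.of_forall hlow)
  rw [key]
  congr 1
  rw [← Real.exp_sum]
  congr 1
  simp only [neg_sub]
  rw [Finset.sum_sub_distrib]
  simp [Finset.sum_const, Finset.card_univ, nsmul_eq_mul, hsl_def, ht_def]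
end

section
/- The finite-dimensional distributions G(z_1,…,z_D; α, θ) = exp(Lθ^α - Σ_{l=1}^L (θ + Σ_{j=1}^D (z_j/K_l(s_j))^{-1/α})^α) satisfy the scaling relation G(z_1,…,z_D; α, θ)^{1/n} = G(n z_1, …, n z_D; α, θ/n^{1/α}) for every positive integer n. Consequently G^{1/n} is itself a valid joint distribution function for every n, i.e., G is max-infinitely divisible. -/
open Real

/-- The max-id finite-dimensional distributions
G(z; α, θ) = exp(Lθ^α - Σ_l (θ + Σ_j (z_j/K_l(s_j))^{-1/α})^α) satisfy the
scaling relation G(z; α, θ)^{1/n} = G(n z; α, θ/n^{1/α}) for every positive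
integer n.  Consequently G^{1/n} is itself a joint distribution function of
the same form (with tilting parameter θ/n^{1/α}), so G is max-infinitely
divisible. -/
theorem maxid_scaling_relation
    (L D : ℕ) (hL : 0 < L) (hD : 0 < D)
    (α : ℝ) (hα : α ∈ Set.Ioo (0:ℝ) 1)
    (K : Fin L → Fin D → ℝ) (hK : ∀ l j, 0 ≤ K l j)
    (G : (Fin D → ℝ) → ℝ → ℝ)
    (hG : ∀ (z : Fin D → ℝ) (θ : ℝ),
      G z θ = Real.exp ((L : ℝ) * θ ^ α
        - ∑ l, (θ + ∑ j, (z j / K l j) ^ (-(1/α))) ^ α)) :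
    ∀ θ : ℝ, 0 ≤ θ → ∀ z : Fin D → ℝ, (∀ j, 0 < z j) → ∀ n : ℕ, 0 < n →
      (G z θ) ^ ((n : ℝ)⁻¹)
        = G (fun j => (n : ℝ) * z j) (θ / (n : ℝ) ^ (1/α)) := by
  intro θ hθ z hz n hn
  have hα0 : 0 < α := hα.1
  have hn0 : (0:ℝ) < (n : ℝ) := by exact_mod_cast hn
  rw [hG, hG]
  rw [← Real.exp_log (Real.exp_pos _), Real.log_exp, ← Real.exp_mul]
  congr 1
  have hscale : (n : ℝ) ^ (-(1/α)) * ((n : ℝ) ^ ((1:ℝ)/α)) = 1 := by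
    rw [← Real.rpow_add hn0]
    simp
  -- key pointwise identity for each l
  have key : ∀ l : Fin L,
      (θ / (n : ℝ) ^ ((1:ℝ)/α) + ∑ j, ((n : ℝ) * z j / K l j) ^ (-(1/α))) ^ α
        = (n : ℝ)⁻¹ * (θ + ∑ j, (z j / K l j) ^ (-(1/α))) ^ α := by
    intro l
    have hsum : ∑ j, ((n : ℝ) * z j / K l j) ^ (-(1/α))
        = (n : ℝ) ^ (-(1/α)) * ∑ j, (z j / K l j) ^ (-(1/α)) := by
      rw [Finset.mul_sum]
      refine Finset.sum_congr rfl fun j _ => ?_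
      rw [mul_div_assoc, Real.mul_rpow hn0.le (div_nonneg (hz j).le (hK l j))]
    have hdiv : θ / (n : ℝ) ^ ((1:ℝ)/α) = (n : ℝ) ^ (-(1/α)) * θ := by
      rw [Real.rpow_neg hn0.le, div_eq_mul_inv, mul_comm]
    have hX : 0 ≤ θ + ∑ j, (z j / K l j) ^ (-(1/α)) := by
      refine add_nonneg hθ (Finset.sum_nonneg fun j _ => ?_)
      exact Real.rpow_nonneg (div_nonneg (hz j).le (hK l j)) _
    rw [hsum, hdiv, ← mul_add,
      Real.mul_rpow (Real.rpow_nonneg hn0.le _) hX,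
      ← Real.rpow_mul hn0.le]
    congr 1
    rw [show -(1/α) * α = -1 by field_simp, Real.rpow_neg_one]
  have hθα : (θ / (n : ℝ) ^ ((1:ℝ)/α)) ^ α = (n : ℝ)⁻¹ * θ ^ α := by
    rw [Real.div_rpow hθ (Real.rpow_nonneg hn0.le _), ← Real.rpow_mul hn0.le,
      show (1/α) * α = 1 by field_simp, Real.rpow_one, div_eq_inv_mul]
  simp only [key, hθα, ← Finset.mul_sum]
  ring
end

section
/- For the max-id model, the joint distribution G(z_1,…,z_D; α, θ) is max-stable (i.e., G(nz_1,…,nz_D; α, θ)^n = G(z_1,…,z_D; α, θ) for all n) if and only if θ = 0. -/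
open Real


/-- Decreasing differences for strictly concave rpow. -/
lemma rpow_diff_strict_anti {p : ℝ} (hp0 : 0 < p) (hp1 : p < 1)
    {a b u : ℝ} (ha : 0 ≤ a) (hab : a < b) (hu : 0 < u) :
    (b + u) ^ p - b ^ p < (a + u) ^ p - a ^ p := by
  have hsc := Real.strictConcaveOn_rpow hp0 hp1
  set d := b + u with hd
  have had : a < d := by linarith
  have hda : 0 < d - a := by linarith
  set lam := (d - b) / (d - a) with hlam
  have hdb : d - b = u := by simp [hd]
  have hlam0 : 0 < lam := by rw [hlam, hdb]; exact div_pos hu hda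
  have hlam1 : lam < 1 := by
    rw [hlam]; rw [div_lt_one hda]; linarith
  have h1 : lam * a + (1 - lam) * d = b := by
    field_simp [hlam]; linarith [show lam * (d - a) = d - b from by rw [hlam]; exact div_mul_cancel₀ _ (ne_of_gt hda)]
  have h2 : (1 - lam) * a + lam * d = a + u := by
    field_simp [hlam]; linarith [show lam * (d - a) = d - b from by rw [hlam]; exact div_mul_cancel₀ _ (ne_of_gt hda)]
  have hd0 : (0:ℝ) ≤ d := by linarith
  have hb' : lam • ((fun x : ℝ => x ^ p) a) + (1 - lam) • ((fun x : ℝ => x ^ p) d)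
      < (fun x : ℝ => x ^ p) (lam • a + (1 - lam) • d) :=
    hsc.2 (Set.mem_Ici.2 ha) (Set.mem_Ici.2 hd0) (ne_of_lt had) hlam0
      (by linarith) (by ring)
  have hc' : (1 - lam) • ((fun x : ℝ => x ^ p) a) + lam • ((fun x : ℝ => x ^ p) d)
      < (fun x : ℝ => x ^ p) ((1 - lam) • a + lam • d) :=
    hsc.2 (Set.mem_Ici.2 ha) (Set.mem_Ici.2 hd0) (ne_of_lt had)
      (by linarith) hlam0 (by ring)
  simp only [smul_eq_mul] at hb' hc'
  rw [h1] at hb'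
  rw [h2] at hc'
  nlinarith [hb', hc']

/-- Key inequality: for θ > 0, the rpow increment is strictly sub-homogeneous. -/
lemma key_ineq {p θ v β : ℝ} (hp0 : 0 < p) (hp1 : p < 1)
    (hθ : 0 < θ) (hv : 0 < v) (hβ0 : 0 < β) (hβ1 : β < 1) :
    (θ + β * v) ^ p - θ ^ p < β ^ p * ((θ + v) ^ p - θ ^ p) := by
  have h := rpow_diff_strict_anti hp0 hp1
    (a := β * θ) (b := β * (θ + v)) (u := (1 - β) * θ)
    (by positivity) (by nlinarith) (by nlinarith)
  have e1 : β * (θ + v) + (1 - β) * θ = θ + β * v := by ring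
  have e2 : β * θ + (1 - β) * θ = θ := by ring
  rw [e1, e2] at h
  have m1 : (β * (θ + v)) ^ p = β ^ p * (θ + v) ^ p :=
    Real.mul_rpow hβ0.le (by linarith)
  have m2 : (β * θ) ^ p = β ^ p * θ ^ p := Real.mul_rpow hβ0.le hθ.le
  rw [m1, m2] at h
  linarith

/-- The max-id joint distribution
G(z; α, θ) = exp(Lθ^α - Σ_l (θ + Σ_j (z_j/K_l(s_j))^{-1/α})^α)
is max-stable (G(nz; α, θ)^n = G(z; α, θ) for all n and all z > 0) if and
only if θ = 0. -/
theorem maxid_max_stable_iff_theta_eq_zero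
    (L D : ℕ) (hL : 0 < L) (hD : 0 < D)
    (α θ : ℝ) (hα : α ∈ Set.Ioo (0:ℝ) 1) (hθ : 0 ≤ θ)
    (K : Fin L → Fin D → ℝ) (hK : ∀ l j, 0 ≤ K l j)
    (hKpos : ∃ l j, 0 < K l j)
    (G : (Fin D → ℝ) → ℝ)
    (hG : ∀ z : Fin D → ℝ,
      G z = Real.exp ((L : ℝ) * θ ^ α
        - ∑ l, (θ + ∑ j, (z j / K l j) ^ (-(1/α))) ^ α)) :
    (∀ n : ℕ, 0 < n → ∀ z : Fin D → ℝ, (∀ j, 0 < z j) →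
        (G (fun j => (n : ℝ) * z j)) ^ n = G z)
      ↔ θ = 0 := by
  obtain ⟨hα0, hα1⟩ := hα
  have hαne : α ≠ 0 := ne_of_gt hα0
  constructor
  · -- max-stable → θ = 0
    intro h
    by_contra hθ0
    have hθpos : 0 < θ := lt_of_le_of_ne hθ (Ne.symm hθ0)
    set β : ℝ := (2:ℝ) ^ (-(1/α)) with hβdef
    have hβ0 : 0 < β := Real.rpow_pos_of_pos (by norm_num) _
    have hβ1 : β < 1 :=
      Real.rpow_lt_one_of_one_lt_of_neg (by norm_num)
        (neg_lt_zero.mpr (by positivity))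
    have hβα : β ^ α = 1/2 := by
      rw [hβdef, ← Real.rpow_mul (by norm_num : (0:ℝ) ≤ 2),
        show -(1/α) * α = -1 by field_simp, Real.rpow_neg_one]
      norm_num
    have h2 := h 2 (by norm_num) (fun _ => (1:ℝ)) (fun _ => one_pos)
    rw [hG, hG] at h2
    simp only [Nat.cast_ofNat, mul_one] at h2
    have e2 : ∀ l : Fin L, ∑ j, ((2:ℝ) / K l j) ^ (-(1/α))
        = β * ∑ j, ((1:ℝ) / K l j) ^ (-(1/α)) := by
      intro l
      rw [Finset.mul_sum]
      refine Finset.sum_congr rfl fun j _ => ?_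
      rw [show (2:ℝ) / K l j = 2 * (1 / K l j) by ring,
        Real.mul_rpow (by norm_num) (div_nonneg zero_le_one (hK l j))]
    simp only [e2] at h2
    rw [← Real.exp_nat_mul, Real.exp_eq_exp] at h2
    push_cast at h2
    -- per-term inequality
    have hSnn : ∀ l : Fin L, 0 ≤ ∑ j, ((1:ℝ) / K l j) ^ (-(1/α)) :=
      fun l => Finset.sum_nonneg fun j _ =>
        Real.rpow_nonneg (div_nonneg zero_le_one (hK l j)) _
    obtain ⟨l₀, j₀, hK0⟩ := hKpos
    have hS0 : 0 < ∑ j, ((1:ℝ) / K l₀ j) ^ (-(1/α)) := by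
      refine Finset.sum_pos' (fun j _ =>
        Real.rpow_nonneg (div_nonneg zero_le_one (hK l₀ j)) _)
        ⟨j₀, Finset.mem_univ _, ?_⟩
      exact Real.rpow_pos_of_pos (by positivity) _
    have hterm : ∀ S : ℝ, 0 < S →
        2 * (θ + β * S) ^ α - 2 * θ ^ α < (θ + S) ^ α - θ ^ α := by
      intro S hS
      have := key_ineq hα0 hα1 hθpos hS hβ0 hβ1
      rw [hβα] at this
      linarith
    have hlt : ∑ l : Fin L,
          (2 * (θ + β * ∑ j, ((1:ℝ) / K l j) ^ (-(1/α))) ^ α - 2 * θ ^ α)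
        < ∑ l : Fin L,
          ((θ + ∑ j, ((1:ℝ) / K l j) ^ (-(1/α))) ^ α - θ ^ α) := by
      refine Finset.sum_lt_sum (fun l _ => ?_) ⟨l₀, Finset.mem_univ _, ?_⟩
      · rcases (hSnn l).eq_or_lt with hS | hS
        · rw [← hS, mul_zero, add_zero]; linarith
        · exact (hterm _ hS).le
      · exact hterm _ hS0
    rw [Finset.sum_sub_distrib, Finset.sum_sub_distrib, Finset.sum_const,
      Finset.sum_const, Finset.card_univ, Fintype.card_fin,
      nsmul_eq_mul, nsmul_eq_mul, ← Finset.mul_sum] at hlt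
    linarith
  · -- θ = 0 → max-stable
    rintro rfl
    intro n hn z hz
    have hn0 : (0:ℝ) < (n:ℝ) := by exact_mod_cast hn
    rw [hG, hG]
    have escale : ∀ l : Fin L, ∑ j, ((n:ℝ) * z j / K l j) ^ (-(1/α))
        = (n:ℝ) ^ (-(1/α)) * ∑ j, (z j / K l j) ^ (-(1/α)) := by
      intro l
      rw [Finset.mul_sum]
      refine Finset.sum_congr rfl fun j _ => ?_
      rw [mul_div_assoc,
        Real.mul_rpow hn0.le (div_nonneg (hz j).le (hK l j))]
    have epow : ∀ l : Fin L,
        ((n:ℝ) ^ (-(1/α)) * ∑ j, (z j / K l j) ^ (-(1/α))) ^ α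
        = (n:ℝ)⁻¹ * (∑ j, (z j / K l j) ^ (-(1/α))) ^ α := by
      intro l
      have hSnn : 0 ≤ ∑ j, (z j / K l j) ^ (-(1/α)) :=
        Finset.sum_nonneg fun j _ =>
          Real.rpow_nonneg (div_nonneg (hz j).le (hK l j)) _
      rw [Real.mul_rpow (Real.rpow_nonneg hn0.le _) hSnn,
        ← Real.rpow_mul hn0.le, show -(1/α) * α = -1 by field_simp,
        Real.rpow_neg_one]
    simp only [escale, epow, Real.zero_rpow hαne, mul_zero, zero_add, zero_sub]
    rw [← Real.exp_nat_mul, Real.exp_eq_exp, ← Finset.mul_sum]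
    field_simp
end

section
/- The marginal distribution of the max-id process at location s, G_s(z) = exp(Lθ^α - Σ_{l=1}^L (θ + (z/K_l(s))^{-1/α})^α), is a valid continuous distribution function on (0,∞): it is nondecreasing in z, tends to 0 as z → 0+ (provided some K_l(s) > 0), and tends to 1 as z → ∞. -/
open Real Filter Topology

/-- The marginal G_s(z) = exp(Lθ^α - Σ_l (θ + (z/K_l(s))^{-1/α})^α)
of the max-id process is a valid continuous distribution function on (0,∞):
it is nondecreasing in z, tends to 0 as z → 0⁺ (given some K_l(s) > 0), and
tends to 1 as z → ∞. -/
theorem maxid_marginal_is_df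
    (L : ℕ) (hL : 0 < L)
    (α θ : ℝ) (hα : α ∈ Set.Ioo (0:ℝ) 1) (hθ : 0 ≤ θ)
    (K : Fin L → ℝ) (hK : ∀ l, 0 ≤ K l) (hKsum : ∑ l, K l = 1)
    (hKpos : ∃ l, 0 < K l)
    (G : ℝ → ℝ)
    (hG : ∀ z : ℝ, G z = Real.exp ((L : ℝ) * θ ^ α
      - ∑ l, (θ + (z / K l) ^ (-(1/α))) ^ α)) :
    MonotoneOn G (Set.Ioi 0)
      ∧ ContinuousOn G (Set.Ioi 0)
      ∧ Tendsto G (nhdsWithin 0 (Set.Ioi 0)) (nhds 0)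
      ∧ Tendsto G atTop (nhds 1) := by
  obtain ⟨hα0, hα1⟩ := hα
  have hia : (0:ℝ) < 1/α := by positivity
  have hcneg : -(1/α) < 0 := neg_neg_iff_pos.mpr hia
  have hcne : -(1/α) ≠ 0 := ne_of_lt hcneg
  -- nonnegativity of inner terms
  have hinn : ∀ (l : Fin L) (z : ℝ), 0 < z → 0 ≤ (z / K l) ^ (-(1/α)) := by
    intro l z hz
    exact Real.rpow_nonneg (div_nonneg hz.le (hK l)) _
  have hterm_nonneg : ∀ (l : Fin L) (z : ℝ), 0 < z →
      0 ≤ (θ + (z / K l) ^ (-(1/α))) ^ α := by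
    intro l z hz
    exact Real.rpow_nonneg (add_nonneg hθ (hinn l z hz)) _
  refine ⟨?_, ?_, ?_, ?_⟩
  · -- Monotone
    intro z1 hz1 z2 hz2 h12
    rw [hG z1, hG z2, Real.exp_le_exp]
    apply sub_le_sub_left
    apply Finset.sum_le_sum
    intro l _
    rcases eq_or_lt_of_le (hK l) with hK0 | hKl
    · simp [← hK0, div_zero, Real.zero_rpow hcne]
    · have h1 : 0 < z1 / K l := div_pos hz1 hKl
      have h2 : z1 / K l ≤ z2 / K l := by gcongr
      have := Real.rpow_le_rpow_of_nonpos h1 h2 hcneg.le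
      exact Real.rpow_le_rpow (add_nonneg hθ (hinn l z2 hz2)) (by linarith) hα0.le
  · -- Continuous
    rw [continuousOn_congr (fun z _ => hG z)]
    apply (Real.continuous_exp.comp_continuousOn)
    apply ContinuousOn.sub continuousOn_const
    apply continuousOn_finset_sum
    intro l _
    rcases eq_or_lt_of_le (hK l) with hK0 | hKl
    · have : (fun z : ℝ => (θ + (z / K l) ^ (-(1/α))) ^ α) = fun _ => (θ + 0) ^ α := by
        funext z; rw [← hK0, div_zero, Real.zero_rpow hcne]
      rw [this]; exact continuousOn_const
    · intro z hz
      have hzpos : (0:ℝ) < z := hz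
      have hb : z / K l ≠ 0 := ne_of_gt (div_pos hzpos hKl)
      apply ContinuousAt.continuousWithinAt
      have h1 : ContinuousAt (fun z : ℝ => (z / K l) ^ (-(1/α))) z :=
        (continuousAt_id.div_const (K l)).rpow_const (Or.inl hb)
      exact (continuousAt_const.add h1).rpow_const (Or.inr hα0.le)
  · -- Tendsto 0 at 0+
    obtain ⟨l0, hl0⟩ := hKpos
    -- the l0 term tends to atTop
    have hdiv : Tendsto (fun z : ℝ => z / K l0) (𝓝[>] 0) (𝓝[>] 0) := by
      apply tendsto_nhdsWithin_of_tendsto_nhds_of_eventually_within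
      · have := ((continuous_id.div_const (K l0)).tendsto 0).mono_left
          (nhdsWithin_le_nhds (s := Set.Ioi (0:ℝ)))
        simpa using this
      · filter_upwards [self_mem_nhdsWithin] with z hz
        exact div_pos hz hl0
    have hpow : Tendsto (fun t : ℝ => t ^ (-(1/α))) (𝓝[>] 0) atTop := by
      have h1 : Tendsto (fun t : ℝ => (t⁻¹) ^ (1/α)) (𝓝[>] 0) atTop :=
        (tendsto_rpow_atTop hia).comp tendsto_inv_nhdsGT_zero
      apply h1.congr'
      filter_upwards [self_mem_nhdsWithin] with t ht
      rw [Real.inv_rpow (le_of_lt ht), ← Real.rpow_neg (le_of_lt ht)]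
    have hterm : Tendsto (fun z : ℝ => (θ + (z / K l0) ^ (-(1/α))) ^ α)
        (𝓝[>] 0) atTop := by
      have h2 : Tendsto (fun z : ℝ => θ + (z / K l0) ^ (-(1/α))) (𝓝[>] 0) atTop :=
        tendsto_atTop_add_const_left _ θ (hpow.comp hdiv)
      exact (tendsto_rpow_atTop hα0).comp h2
    have hsum : Tendsto (fun z : ℝ => ∑ l, (θ + (z / K l) ^ (-(1/α))) ^ α)
        (𝓝[>] 0) atTop := by
      apply tendsto_atTop_mono' _ _ hterm
      filter_upwards [self_mem_nhdsWithin] with z hz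
      exact Finset.single_le_sum (fun l _ => hterm_nonneg l z hz) (Finset.mem_univ l0)
    have hexpo : Tendsto (fun z : ℝ => (L : ℝ) * θ ^ α
        - ∑ l, (θ + (z / K l) ^ (-(1/α))) ^ α) (𝓝[>] 0) atBot := by
      apply tendsto_atBot_add_const_left
      exact tendsto_neg_atTop_atBot.comp hsum
    have := Real.tendsto_exp_atBot.comp hexpo
    apply this.congr
    intro z; exact (hG z).symm
  · -- Tendsto 1 at ∞
    have hsum : Tendsto (fun z : ℝ => ∑ l, (θ + (z / K l) ^ (-(1/α))) ^ α)
        atTop (𝓝 (∑ _l : Fin L, θ ^ α)) := by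
      apply tendsto_finset_sum
      intro l _
      rcases eq_or_lt_of_le (hK l) with hK0 | hKl
      · have : (fun z : ℝ => (θ + (z / K l) ^ (-(1/α))) ^ α) = fun _ => θ ^ α := by
          funext z; rw [← hK0, div_zero, Real.zero_rpow hcne, add_zero]
        rw [this]; exact tendsto_const_nhds
      · have hdiv : Tendsto (fun z : ℝ => z / K l) atTop atTop :=
          tendsto_id.atTop_div_const hKl
        have h0 : Tendsto (fun z : ℝ => (z / K l) ^ (-(1/α))) atTop (𝓝 0) :=
          (tendsto_rpow_neg_atTop hia).comp hdiv
        have h1 : Tendsto (fun z : ℝ => θ + (z / K l) ^ (-(1/α))) atTop (𝓝 θ) := by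
          simpa using tendsto_const_nhds.add h0
        have h2 := (Real.continuousAt_rpow_const θ α (Or.inr hα0.le)).tendsto.comp h1
        exact h2
    have hsum' : (∑ _l : Fin L, θ ^ α) = (L : ℝ) * θ ^ α := by
      simp [Finset.sum_const, mul_comm]
    rw [hsum'] at hsum
    have hexpo : Tendsto (fun z : ℝ => (L : ℝ) * θ ^ α
        - ∑ l, (θ + (z / K l) ^ (-(1/α))) ^ α) atTop (𝓝 0) := by
      have h := (tendsto_const_nhds (x := (L : ℝ) * θ ^ α) (f := atTop)).sub hsum
      rwa [sub_self] at h
    have := (Real.continuous_exp.tendsto 0).comp hexpo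
    rw [Real.exp_zero] at this
    apply this.congr
    intro z; exact (hG z).symm
end

section
/- For the bivariate max-id distribution with θ > 0, conditional on the basis functions, Pr(Z(s_1) > z | Z(s_2) > z) → 0 as z → ∞; i.e., lim_{z→∞} [1 - G_{s_1}(z) - G_{s_2}(z) + G_{s_1,s_2}(z,z)] / [1 - G_{s_2}(z)] = 0, where G_{s_1,s_2}(z_1,z_2) = exp(Lθ^α - Σ_l (θ + (K_l(s_1)/z_1)^{1/α} + (K_l(s_2)/z_2)^{1/α})^α). -/
open Real Filter Topology


lemma bern_up {α θ x : ℝ} (hα0 : 0 ≤ α) (hα1 : α ≤ 1) (hθ : 0 < θ) (hx : 0 ≤ x) :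
    (θ + x) ^ α ≤ θ ^ α + α * θ ^ (α - 1) * x := by
  have h2 : ((1:ℝ) + x / θ) ^ α ≤ 1 + α * (x / θ) :=
    rpow_one_add_le_one_add_mul_self (by linarith [div_nonneg hx hθ.le]) hα0 hα1
  have h1 : θ + x = θ * (1 + x / θ) := by field_simp
  have hθα : (0:ℝ) < θ ^ α := rpow_pos_of_pos hθ _
  calc (θ + x) ^ α = θ ^ α * (1 + x / θ) ^ α := by
        rw [h1, mul_rpow hθ.le (by positivity)]
    _ ≤ θ ^ α * (1 + α * (x / θ)) := by
        exact mul_le_mul_of_nonneg_left h2 hθα.le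
    _ = θ ^ α + α * θ ^ (α - 1) * x := by
        rw [rpow_sub hθ, rpow_one, mul_add, mul_one]
        field_simp

lemma bern_low {α : ℝ} (hα0 : 0 ≤ α) (hα1 : α ≤ 1) {a b : ℝ} (ha : 0 < a) (hab : a ≤ b) :
    α * b ^ (α - 1) * (b - a) ≤ b ^ α - a ^ α := by
  have hb : 0 < b := ha.trans_le hab
  have hs : -1 ≤ a / b - 1 := by
    have : 0 ≤ a / b := by positivity
    linarith
  have h2 : ((1:ℝ) + (a / b - 1)) ^ α ≤ 1 + α * (a / b - 1) :=
    rpow_one_add_le_one_add_mul_self hs hα0 hα1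
  have h1 : a = b * (1 + (a / b - 1)) := by field_simp; ring
  have hbα : (0:ℝ) < b ^ α := rpow_pos_of_pos hb _
  have key : a ^ α ≤ b ^ α * (1 + α * (a / b - 1)) := by
    calc a ^ α = b ^ α * (1 + (a / b - 1)) ^ α := by
          rw [← mul_rpow hb.le (by linarith), ← h1]
      _ ≤ b ^ α * (1 + α * (a / b - 1)) := mul_le_mul_of_nonneg_left h2 hbα.le
  have hrw : b ^ α * (1 + α * (a / b - 1)) = b ^ α + α * b ^ (α - 1) * (a - b) := by
    rw [rpow_sub hb, rpow_one]
    field_simp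
  rw [hrw] at key
  linarith

lemma slope_le {α θ s : ℝ} (hα0 : 0 < α) (hα1 : α < 1) (hθ : 0 < θ) (hs : 0 ≤ s) :
    θ ^ (α - 1) - (θ + s) ^ (α - 1) ≤ (1 - α) * θ ^ (α - 2) * s := by
  set β := 1 - α with hβ
  have hβ0 : 0 ≤ β := by simp [hβ]; linarith
  have hβ1 : β ≤ 1 := by simp [hβ]; linarith
  have ht : (0:ℝ) < θ ^ β := rpow_pos_of_pos hθ _
  have hθs : (0:ℝ) < θ + s := by linarith
  have hu : (0:ℝ) < (θ + s) ^ β := rpow_pos_of_pos hθs _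
  have htu : θ ^ β ≤ (θ + s) ^ β := rpow_le_rpow hθ.le (by linarith) hβ0
  have hub : (θ + s) ^ β ≤ θ ^ β + β * θ ^ (β - 1) * s := bern_up hβ0 hβ1 hθ hs
  -- rewrite the (α-1) powers as inverses
  have e1 : θ ^ (α - 1) = (θ ^ β)⁻¹ := by
    rw [← rpow_neg hθ.le]; congr 1; ring
  have e2 : (θ + s) ^ (α - 1) = ((θ + s) ^ β)⁻¹ := by
    rw [← rpow_neg hθs.le]; congr 1; ring
  rw [e1, e2]
  have step1 : (θ ^ β)⁻¹ - ((θ + s) ^ β)⁻¹ = ((θ + s) ^ β - θ ^ β) / (θ ^ β * (θ + s) ^ β) := by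
    field_simp
  rw [step1]
  have step2 : ((θ + s) ^ β - θ ^ β) / (θ ^ β * (θ + s) ^ β)
      ≤ (β * θ ^ (β - 1) * s) / (θ ^ β * θ ^ β) := by
    apply div_le_div₀ (by positivity) (by linarith) (by positivity)
    exact mul_le_mul_of_nonneg_left htu ht.le
  refine step2.trans (le_of_eq ?_)
  have hpow : θ ^ (β - 1) = θ ^ (α - 2) * θ ^ (β + β) := by
    rw [← rpow_add hθ]; congr 1; rw [hβ]; ring
  rw [← rpow_add hθ, hpow, hβ]
  have hne : θ ^ ((1 - α) + (1 - α)) ≠ 0 := by positivity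
  field_simp

lemma bracket_abs {α θ x y : ℝ} (hα0 : 0 < α) (hα1 : α < 1) (hθ : 0 < θ)
    (hx : 0 ≤ x) (hy : 0 ≤ y) :
    |((θ + x) ^ α - θ ^ α) - ((θ + x + y) ^ α - (θ + y) ^ α)|
      ≤ α * (1 - α) * θ ^ (α - 2) * (x * (x + y)) := by
  have hθy : (0:ℝ) < θ + y := by linarith
  have hθx : (0:ℝ) < θ + x := by linarith
  rw [abs_le]
  constructor
  · -- lower bound: value ≥ -(α(1-α)θ^(α-2) x (x+y))
    -- (θ+x)^α - θ^α ≥ α(θ+x)^(α-1) x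
    have h1 : α * (θ + x) ^ (α - 1) * x ≤ (θ + x) ^ α - θ ^ α := by
      have := bern_low hα0.le hα1.le hθ (by linarith : θ ≤ θ + x)
      simpa using this
    -- (θ+x+y)^α - (θ+y)^α ≤ α(θ+y)^(α-1) x
    have h2 : (θ + x + y) ^ α - (θ + y) ^ α ≤ α * (θ + y) ^ (α - 1) * x := by
      have := bern_up hα0.le hα1.le hθy hx
      have e : θ + y + x = θ + x + y := by ring
      rw [e] at this; linarith
    -- (θ+y)^(α-1) ≤ θ^(α-1)
    have h3 : (θ + y) ^ (α - 1) ≤ θ ^ (α - 1) :=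
      rpow_le_rpow_of_nonpos hθ (by linarith) (by linarith)
    -- θ^(α-1) - (θ+x)^(α-1) ≤ (1-α)θ^(α-2) x
    have h4 := slope_le hα0 hα1 hθ hx
    have hθ2 : (0:ℝ) < θ ^ (α - 2) := rpow_pos_of_pos hθ _
    have h6 : 0 ≤ α * (1 - α) * θ ^ (α - 2) :=
      mul_nonneg (mul_nonneg hα0.le (by linarith)) hθ2.le
    have h5 : 0 ≤ α * (1 - α) * θ ^ (α - 2) * (x * y) :=
      mul_nonneg h6 (mul_nonneg hx hy)
    nlinarith [mul_le_mul_of_nonneg_right h3 (mul_nonneg hα0.le hx),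
      mul_le_mul_of_nonneg_right h4 (mul_nonneg hα0.le hx)]
  · -- upper bound
    have h1 : (θ + x) ^ α - θ ^ α ≤ α * θ ^ (α - 1) * x := by
      have := bern_up hα0.le hα1.le hθ hx; linarith
    have h2 : α * (θ + x + y) ^ (α - 1) * x ≤ (θ + x + y) ^ α - (θ + y) ^ α := by
      have := bern_low hα0.le hα1.le hθy (by linarith : θ + y ≤ θ + x + y)
      have e : θ + x + y - (θ + y) = x := by ring
      rw [e] at this
      linarith
    have h4 := slope_le hα0 hα1 hθ (by positivity : (0:ℝ) ≤ x + y)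
    have e2 : θ + (x + y) = θ + x + y := by ring
    rw [e2] at h4
    nlinarith [mul_le_mul_of_nonneg_right h4 (mul_nonneg hα0.le hx)]

lemma exp_neg_lip {a b : ℝ} (ha : 0 ≤ a) (hb : 0 ≤ b) :
    |Real.exp (-a) - Real.exp (-b)| ≤ |a - b| := by
  wlog h : a ≤ b generalizing a b
  · rw [abs_sub_comm, abs_sub_comm a b]; exact this hb ha (by linarith)
  have h1 : Real.exp (-b) ≤ Real.exp (-a) := Real.exp_le_exp.mpr (by linarith)
  rw [abs_of_nonneg (by linarith), abs_of_nonpos (by linarith : a - b ≤ 0)]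
  have key : Real.exp (-a) - Real.exp (-b) ≤ b - a := by
    have e : Real.exp (-a) - Real.exp (-b) = Real.exp (-a) * (1 - Real.exp (-(b - a))) := by
      rw [mul_sub, mul_one, ← Real.exp_add]; ring_nf
    rw [e]
    have hle : 1 - Real.exp (-(b - a)) ≤ b - a := by
      have := Real.add_one_le_exp (-(b - a))
      nlinarith [Real.exp_pos (-(b-a))]
    have hexp1 : Real.exp (-a) ≤ 1 := Real.exp_le_one_iff.mpr (by linarith)
    have hnn : 0 ≤ 1 - Real.exp (-(b - a)) := by
      have : Real.exp (-(b - a)) ≤ 1 := Real.exp_le_one_iff.mpr (by linarith)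
      linarith
    nlinarith [mul_le_mul_of_nonneg_right hexp1 hnn]
  linarith

set_option maxHeartbeats 4000000 in
/-- Asymptotic independence of the bivariate max-id distribution
when θ > 0 (conditional on the basis functions): with marginals
G_i(z) = exp(Lθ^α - Σ_l (θ + (K_i l /z)^{1/α})^α) and joint CDF
G₁₂(z₁,z₂) = exp(Lθ^α - Σ_l (θ + (K₁ l /z₁)^{1/α} + (K₂ l /z₂)^{1/α})^α),
the conditional exceedance probability
[1 - G₁(z) - G₂(z) + G₁₂(z,z)] / [1 - G₂(z)] → 0 as z → ∞. -/
theorem maxid_asymptotic_independence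
    (L : ℕ) (hL : 0 < L)
    (α θ : ℝ) (hα : α ∈ Set.Ioo (0:ℝ) 1) (hθ : 0 < θ)
    (K₁ K₂ : Fin L → ℝ) (hK₁ : ∀ l, 0 ≤ K₁ l) (hK₂ : ∀ l, 0 ≤ K₂ l)
    (hK₁sum : ∑ l, K₁ l = 1) (hK₂sum : ∑ l, K₂ l = 1)
    (G₁ G₂ : ℝ → ℝ) (G₁₂ : ℝ → ℝ → ℝ)
    (hG₁ : ∀ z, G₁ z = Real.exp ((L : ℝ) * θ ^ α
      - ∑ l, (θ + (K₁ l / z) ^ (1/α)) ^ α))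
    (hG₂ : ∀ z, G₂ z = Real.exp ((L : ℝ) * θ ^ α
      - ∑ l, (θ + (K₂ l / z) ^ (1/α)) ^ α))
    (hG₁₂ : ∀ z₁ z₂, G₁₂ z₁ z₂ = Real.exp ((L : ℝ) * θ ^ α
      - ∑ l, (θ + (K₁ l / z₁) ^ (1/α) + (K₂ l / z₂) ^ (1/α)) ^ α)) :
    Tendsto (fun z => (1 - G₁ z - G₂ z + G₁₂ z z) / (1 - G₂ z))
      atTop (nhds 0) := by
  obtain ⟨hα0, hα1⟩ := hα
  have hαinv : (0:ℝ) < 1/α := by positivity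
  have hL0 : (0:ℝ) < L := Nat.cast_pos.mpr hL
  have hθ1 : (0:ℝ) < (θ + 1) ^ (α - 1) := rpow_pos_of_pos (by linarith) _
  have hθa1 : (0:ℝ) < θ ^ (α - 1) := rpow_pos_of_pos hθ _
  have hθa2 : (0:ℝ) < θ ^ (α - 2) := rpow_pos_of_pos hθ _
  have hLinv : (0:ℝ) < ((L:ℝ)⁻¹) ^ (1/α) := rpow_pos_of_pos (by positivity) _
  set Cb : ℝ := α * θ ^ (α - 1) * L with hCbdef
  set cθ : ℝ := α * (1 - α) * θ ^ (α - 2) with hcθdef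
  set c₂ : ℝ := α * (θ + 1) ^ (α - 1) * ((L:ℝ)⁻¹) ^ (1/α) with hc₂def
  have hCb0 : 0 ≤ Cb := by positivity
  have hcθ0 : 0 ≤ cθ := mul_nonneg (mul_nonneg hα0.le (by linarith)) hθa2.le
  have hc₂0 : 0 < c₂ := by positivity
  set M : ℝ := Cb + 2 * L * cθ * Real.exp Cb / c₂ with hMdef
  refine squeeze_zero_norm' (a := fun z => M * z ^ (-(1/α))) ?_ ?_
  swap
  · have := (tendsto_rpow_neg_atTop hαinv).const_mul M
    simpa using this
  -- pigeonhole: some K₂ l₀ is at least 1/L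
  have hpig : ∃ l₀ : Fin L, (L:ℝ)⁻¹ ≤ K₂ l₀ := by
    by_contra h
    push_neg at h
    have hne : (Finset.univ : Finset (Fin L)).Nonempty := ⟨⟨0, hL⟩, Finset.mem_univ _⟩
    have hlt := Finset.sum_lt_sum_of_nonempty hne (fun i _ => h i)
    rw [hK₂sum, Finset.sum_const, Finset.card_univ, Fintype.card_fin, nsmul_eq_mul,
      mul_inv_cancel₀ (ne_of_gt hL0)] at hlt
    exact lt_irrefl 1 hlt
  obtain ⟨l₀, hl₀⟩ := hpig
  have hK₁le1 : ∀ l, K₁ l ≤ 1 := fun l => hK₁sum ▸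
    Finset.single_le_sum (fun i _ => hK₁ i) (Finset.mem_univ l)
  have hK₂le1 : ∀ l, K₂ l ≤ 1 := fun l => hK₂sum ▸
    Finset.single_le_sum (fun i _ => hK₂ i) (Finset.mem_univ l)
  filter_upwards [eventually_ge_atTop (1:ℝ)] with z hz1
  have hz0 : (0:ℝ) < z := lt_of_lt_of_le one_pos hz1
  set w : ℝ := z ^ (-(1/α)) with hwdef
  have hw0 : 0 < w := rpow_pos_of_pos hz0 _
  have hw1 : w ≤ 1 := rpow_le_one_of_one_le_of_nonpos hz1 (by linarith only [hαinv])
  have hwinv : (1/z) ^ (1/α) = w := by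
    rw [hwdef, div_rpow zero_le_one hz0.le, one_rpow, Real.rpow_neg hz0.le, one_div]
  -- bounds on the basis values
  have hx0 : ∀ l, 0 ≤ (K₁ l / z) ^ (1/α) :=
    fun l => rpow_nonneg (div_nonneg (hK₁ l) hz0.le) _
  have hy0 : ∀ l, 0 ≤ (K₂ l / z) ^ (1/α) :=
    fun l => rpow_nonneg (div_nonneg (hK₂ l) hz0.le) _
  have hxw : ∀ l, (K₁ l / z) ^ (1/α) ≤ w := by
    intro l
    rw [← hwinv]
    apply rpow_le_rpow (div_nonneg (hK₁ l) hz0.le) _ hαinv.le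
    gcongr
    exact hK₁le1 l
  have hyw : ∀ l, (K₂ l / z) ^ (1/α) ≤ w := by
    intro l
    rw [← hwinv]
    apply rpow_le_rpow (div_nonneg (hK₂ l) hz0.le) _ hαinv.le
    gcongr
    exact hK₂le1 l
  -- the three exponent sums
  set A : ℝ := (∑ l, (θ + (K₁ l / z) ^ (1/α)) ^ α) - L * θ ^ α with hAdef
  set B : ℝ := (∑ l, (θ + (K₂ l / z) ^ (1/α)) ^ α) - L * θ ^ α with hBdef
  set C : ℝ := (∑ l, (θ + (K₁ l / z) ^ (1/α) + (K₂ l / z) ^ (1/α)) ^ α) - L * θ ^ α with hCdef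
  have hsumconst : ∑ _l : Fin L, θ ^ α = (L:ℝ) * θ ^ α := by
    rw [Finset.sum_const, Finset.card_univ, Fintype.card_fin, nsmul_eq_mul]
  have hArep : A = ∑ l, ((θ + (K₁ l / z) ^ (1/α)) ^ α - θ ^ α) := by
    rw [hAdef, Finset.sum_sub_distrib, hsumconst]
  have hBrep : B = ∑ l, ((θ + (K₂ l / z) ^ (1/α)) ^ α - θ ^ α) := by
    rw [hBdef, Finset.sum_sub_distrib, hsumconst]
  have hCrep : C = ∑ l, ((θ + (K₁ l / z) ^ (1/α) + (K₂ l / z) ^ (1/α)) ^ α - θ ^ α) := by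
    rw [hCdef, Finset.sum_sub_distrib, hsumconst]
  have hterm : ∀ (t : ℝ), 0 ≤ t → 0 ≤ (θ + t) ^ α - θ ^ α := by
    intro t ht
    have := rpow_le_rpow hθ.le (by linarith only [ht] : θ ≤ θ + t) hα0.le
    linarith only [this]
  have hA0 : 0 ≤ A := by
    rw [hArep]; exact Finset.sum_nonneg fun l _ => hterm _ (hx0 l)
  have hB0 : 0 ≤ B := by
    rw [hBrep]; exact Finset.sum_nonneg fun l _ => hterm _ (hy0 l)
  have hC0 : 0 ≤ C := by
    rw [hCrep]
    refine Finset.sum_nonneg fun l _ => ?_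
    have h := hterm _ (add_nonneg (hx0 l) (hy0 l))
    rw [← add_assoc] at h; exact h
  have htermU : ∀ (t : ℝ), 0 ≤ t → t ≤ w → (θ + t) ^ α - θ ^ α ≤ α * θ ^ (α-1) * w := by
    intro t ht htw
    have h := bern_up hα0.le hα1.le hθ ht
    have h2 : α * θ ^ (α-1) * t ≤ α * θ ^ (α-1) * w :=
      mul_le_mul_of_nonneg_left htw (mul_nonneg hα0.le hθa1.le)
    linarith only [h, h2]
  have hAle : A ≤ Cb * w := by
    rw [hArep]
    refine (Finset.sum_le_sum (fun l _ => htermU _ (hx0 l) (hxw l))).trans ?_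
    rw [hCbdef, Finset.sum_const, Finset.card_univ, Fintype.card_fin, nsmul_eq_mul]
    exact le_of_eq (by ring)
  have hBle : B ≤ Cb * w := by
    rw [hBrep]
    refine (Finset.sum_le_sum (fun l _ => htermU _ (hy0 l) (hyw l))).trans ?_
    rw [hCbdef, Finset.sum_const, Finset.card_univ, Fintype.card_fin, nsmul_eq_mul]
    exact le_of_eq (by ring)
  -- lower bound on B
  have hBge : c₂ * w ≤ B := by
    have hy₀ge : ((L:ℝ)⁻¹) ^ (1/α) * w ≤ (K₂ l₀ / z) ^ (1/α) := by
      have h1 : ((L:ℝ)⁻¹ / z) ^ (1/α) ≤ (K₂ l₀ / z) ^ (1/α) := by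
        apply rpow_le_rpow (by positivity) _ hαinv.le
        gcongr
      have hzinv : z⁻¹ ^ (1/α) = w := by
        rw [show z⁻¹ = 1/z from (one_div z).symm, hwinv]
      have h2 : ((L:ℝ)⁻¹ / z) ^ (1/α) = ((L:ℝ)⁻¹) ^ (1/α) * w := by
        rw [div_eq_mul_inv, mul_rpow (by positivity) (by positivity), hzinv]
      linarith only [h1, h2]
    have hb₀ : α * (θ+1) ^ (α-1) * ((K₂ l₀ / z) ^ (1/α)) ≤ (θ + (K₂ l₀ / z) ^ (1/α)) ^ α - θ ^ α := by
      have h1 := bern_low hα0.le hα1.le hθ (by linarith only [hy0 l₀] : θ ≤ θ + (K₂ l₀ / z) ^ (1/α))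
      rw [add_sub_cancel_left] at h1
      have h2 : (θ+1) ^ (α-1) ≤ (θ + (K₂ l₀ / z) ^ (1/α)) ^ (α-1) := by
        apply rpow_le_rpow_of_nonpos (by linarith only [hθ, hy0 l₀]) _ (by linarith only [hα1])
        linarith only [hyw l₀, hw1]
      calc α * (θ+1) ^ (α-1) * ((K₂ l₀ / z) ^ (1/α))
          ≤ α * (θ + (K₂ l₀ / z) ^ (1/α)) ^ (α-1) * ((K₂ l₀ / z) ^ (1/α)) :=
            mul_le_mul_of_nonneg_right (mul_le_mul_of_nonneg_left h2 hα0.le) (hy0 l₀)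
        _ ≤ (θ + (K₂ l₀ / z) ^ (1/α)) ^ α - θ ^ α := h1
    have hsingle : (θ + (K₂ l₀ / z) ^ (1/α)) ^ α - θ ^ α ≤ B := by
      rw [hBrep]
      exact Finset.single_le_sum (fun l _ => hterm _ (hy0 l)) (Finset.mem_univ l₀)
    have hc₂w : c₂ * w = α * (θ+1) ^ (α-1) * (((L:ℝ)⁻¹) ^ (1/α) * w) := by
      rw [hc₂def]; ring
    rw [hc₂w]
    refine le_trans (mul_le_mul_of_nonneg_left hy₀ge (by positivity)) (hb₀.trans hsingle)
  have hB0' : 0 < B := lt_of_lt_of_le (by positivity) hBge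
  -- the second-order bound
  have hABC : |A + B - C| ≤ 2 * L * cθ * (w * w) := by
    have hrep : A + B - C = ∑ l, (((θ + (K₁ l / z) ^ (1/α)) ^ α - θ ^ α)
        - ((θ + (K₁ l / z) ^ (1/α) + (K₂ l / z) ^ (1/α)) ^ α - (θ + (K₂ l / z) ^ (1/α)) ^ α)) := by
      rw [hArep, hBrep, hCrep, ← Finset.sum_add_distrib, ← Finset.sum_sub_distrib]
      exact Finset.sum_congr rfl fun l _ => by ring
    rw [hrep]
    refine (Finset.abs_sum_le_sum_abs _ _).trans ?_
    have hbound : ∀ l : Fin L, |((θ + (K₁ l / z) ^ (1/α)) ^ α - θ ^ α)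
        - ((θ + (K₁ l / z) ^ (1/α) + (K₂ l / z) ^ (1/α)) ^ α - (θ + (K₂ l / z) ^ (1/α)) ^ α)|
        ≤ 2 * cθ * (w * w) := by
      intro l
      refine (bracket_abs hα0 hα1 hθ (hx0 l) (hy0 l)).trans ?_
      have h1 : (K₁ l / z) ^ (1/α) * (K₁ l / z) ^ (1/α) ≤ w * w :=
        mul_le_mul (hxw l) (hxw l) (hx0 l) hw0.le
      have h2 : (K₁ l / z) ^ (1/α) * (K₂ l / z) ^ (1/α) ≤ w * w :=
        mul_le_mul (hxw l) (hyw l) (hy0 l) hw0.le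
      have h3 : (K₁ l / z) ^ (1/α) * ((K₁ l / z) ^ (1/α) + (K₂ l / z) ^ (1/α)) ≤ 2 * (w * w) := by
        nlinarith only [h1, h2]
      rw [hcθdef]
      have h4 := mul_le_mul_of_nonneg_left h3 hcθ0
      rw [hcθdef] at h4
      linarith only [h4]
    refine (Finset.sum_le_sum (fun l _ => hbound l)).trans ?_
    rw [Finset.sum_const, Finset.card_univ, Fintype.card_fin, nsmul_eq_mul]
    exact le_of_eq (by ring)
  -- switch to exponentials
  have hG1z : G₁ z = Real.exp (-A) := by rw [hG₁ z]; congr 1; rw [hAdef]; ring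
  have hG2z : G₂ z = Real.exp (-B) := by rw [hG₂ z]; congr 1; rw [hBdef]; ring
  have hG12z : G₁₂ z z = Real.exp (-C) := by rw [hG₁₂ z z]; congr 1; rw [hCdef]; ring
  clear_value A B C w Cb cθ c₂ M
  have hexpB1 : Real.exp (-B) < 1 := by
    have : Real.exp (-B) < Real.exp 0 := Real.exp_lt_exp.mpr (by linarith only [hB0'])
    simpa using this
  have hD0 : 0 < 1 - Real.exp (-B) := by linarith only [hexpB1]
  have hDge : B * Real.exp (-B) ≤ 1 - Real.exp (-B) := by
    have h := Real.add_one_le_exp B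
    have hmul : Real.exp B * Real.exp (-B) = 1 := by rw [← Real.exp_add]; simp
    nlinarith only [h, hmul, Real.exp_pos (-B), hB0']
  rw [hG1z, hG2z, hG12z, Real.norm_eq_abs]
  have hkey : (1 - Real.exp (-A) - Real.exp (-B) + Real.exp (-C)) / (1 - Real.exp (-B))
      = (1 - Real.exp (-A)) + (Real.exp (-C) - Real.exp (-(A+B))) / (1 - Real.exp (-B)) := by
    have hAB : Real.exp (-(A+B)) = Real.exp (-A) * Real.exp (-B) := by
      rw [neg_add, Real.exp_add]
    field_simp
    rw [hAB]
    ring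
  rw [hkey]
  have hX0 : 0 ≤ 1 - Real.exp (-A) := by
    have : Real.exp (-A) ≤ 1 := Real.exp_le_one_iff.mpr (by linarith only [hA0])
    linarith only [this]
  have hXle : 1 - Real.exp (-A) ≤ Cb * w := by
    have := Real.add_one_le_exp (-A)
    linarith only [this, hAle]
  have hYle : |Real.exp (-C) - Real.exp (-(A+B))| ≤ 2 * L * cθ * (w * w) := by
    refine (exp_neg_lip hC0 (by linarith only [hA0, hB0] : (0:ℝ) ≤ A + B)).trans ?_
    rw [abs_sub_comm]
    exact hABC
  have htri : |(1 - Real.exp (-A)) + (Real.exp (-C) - Real.exp (-(A+B))) / (1 - Real.exp (-B))|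
      ≤ (1 - Real.exp (-A)) + |Real.exp (-C) - Real.exp (-(A+B))| / (1 - Real.exp (-B)) := by
    refine (abs_add_le _ _).trans ?_
    rw [abs_of_nonneg hX0, abs_div, abs_of_nonneg hD0.le]
  refine htri.trans ?_
  have hBCb : B ≤ Cb := hBle.trans (by nlinarith only [hCb0, hw1, hw0])
  have hdenom : c₂ * w * Real.exp (-Cb) ≤ B * Real.exp (-B) := by
    have h1 : Real.exp (-Cb) ≤ Real.exp (-B) := Real.exp_le_exp.mpr (by linarith only [hBCb])
    exact mul_le_mul hBge h1 (Real.exp_pos _).le hB0'.le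
  have hfrac : |Real.exp (-C) - Real.exp (-(A+B))| / (1 - Real.exp (-B))
      ≤ (2 * L * cθ * (w * w)) / (c₂ * w * Real.exp (-Cb)) := by
    apply div_le_div₀ (by positivity) hYle (by positivity) (hdenom.trans hDge)
  have hfrac2 : (2 * L * cθ * (w * w)) / (c₂ * w * Real.exp (-Cb))
      = (2 * L * cθ * Real.exp Cb / c₂) * w := by
    rw [Real.exp_neg]
    have he : Real.exp Cb ≠ 0 := (Real.exp_pos _).ne'
    field_simp
  rw [hfrac2] at hfrac
  have hMw : M * w = Cb * w + (2 * L * cθ * Real.exp Cb / c₂) * w := by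
    rw [hMdef]; ring
  rw [hMw]
  linarith only [hXle, hfrac]
end
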